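/- arXiv:1811.11305 — 5 statements merged into one kernel-verified Lean document; each statement's English description precedes it below -/
import Mathlib

section
/- Let a and b be nonzero integers, n a positive integer such that aj + b ≠ 0 for every integer j with 1 ≤ j ≤ n, and k a positive integer. Then ∑_{j=1}^{n} 1/(aj+b)^{2k} = -1/(2b^{2k}) + 1/(2(an+b)^{2k}) - (-1)^{k}(2π)^{2k} ∫_{0}^{1} [ ∑_{j=0}^{k} B_{2j}(2-2^{2j})(1-u)^{2k-2j}/((2j)!(2k-2j)!) ]·cos(π(an+2b)u)·sin(πanu)·cot(πau) du. -/
open Finset Real MeasureTheory intervalIntegral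

lemma bernoulli_odd_zero {j : ℕ} (hj : Odd j) (h1 : j ≠ 1) : bernoulli j = 0 := by
  rw [bernoulli_eq_bernoulli'_of_ne_one h1]
  exact bernoulli'_eq_zero_of_odd hj (by rcases hj with ⟨m, rfl⟩; omega)

lemma bernoulli'_eq_neg_pow (m : ℕ) : bernoulli' m = (-1 : ℚ)^m * bernoulli m := by
  rcases Nat.even_or_odd m with hm | hm
  · rcases Nat.eq_zero_or_pos m with rfl | hpos
    · simp
    · rw [bernoulli_eq_bernoulli'_of_ne_one (by rintro rfl; simp at hm), hm.neg_one_pow, one_mul]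
  · rcases eq_or_ne m 1 with rfl | h1
    · norm_num [bernoulli_one]
    · rw [bernoulli_eq_bernoulli'_of_ne_one h1, bernoulli'_eq_zero_of_odd hm
        (lt_of_le_of_ne (Nat.one_le_iff_ne_zero.2 (by rintro rfl; simp at hm)) (Ne.symm h1)),
        mul_zero]

lemma bern_comp_one_sub (n : ℕ) :
    (Polynomial.bernoulli n).comp (1 - Polynomial.X) = (-1 : ℚ)^n • Polynomial.bernoulli n := by
  induction n with
  | zero => simp
  | succ n ih =>
    have hd : Polynomial.derivative ((Polynomial.bernoulli (n+1)).comp (1 - Polynomial.X)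
        - (-1 : ℚ)^(n+1) • Polynomial.bernoulli (n+1)) = 0 := by
      rw [map_sub, Polynomial.derivative_comp_one_sub_X, Polynomial.derivative_smul,
        Polynomial.derivative_bernoulli_add_one, Polynomial.mul_comp]
      simp only [Polynomial.add_comp, Polynomial.natCast_comp, Polynomial.one_comp, ih,
        Polynomial.smul_eq_C_mul, pow_succ]
      simp only [map_mul, map_pow, map_neg, map_one]
      ring
    have hc := Polynomial.eq_C_of_derivative_eq_zero hd
    have h0 : Polynomial.eval 0 ((Polynomial.bernoulli (n+1)).comp (1 - Polynomial.X)
        - (-1 : ℚ)^(n+1) • Polynomial.bernoulli (n+1)) = 0 := by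
      simp only [Polynomial.eval_sub, Polynomial.eval_smul, Polynomial.eval_comp,
        Polynomial.eval_sub, Polynomial.eval_one, Polynomial.eval_X, sub_zero,
        Polynomial.bernoulli_eval_one, Polynomial.bernoulli_eval_zero, smul_eq_mul]
      rw [bernoulli'_eq_neg_pow, sub_self]
    rw [hc, Polynomial.eval_C] at h0
    have hz : (Polynomial.bernoulli (n+1)).comp (1 - Polynomial.X)
        - (-1 : ℚ)^(n+1) • Polynomial.bernoulli (n+1) = 0 := by rw [hc, h0, map_zero]
    rw [sub_eq_zero] at hz
    exact hz

lemma bern_eval_half_odd {n : ℕ} (hn : Odd n) :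
    (Polynomial.bernoulli n).eval (1/2 : ℚ) = 0 := by
  have := congrArg (Polynomial.eval (1/2 : ℚ)) (bern_comp_one_sub n)
  rw [Polynomial.eval_comp, Polynomial.eval_smul] at this
  norm_num [hn.neg_one_pow] at this
  linarith [this]

lemma sum_choose_two_pow_bernoulli {n : ℕ} (hn : Odd n) :
    ∑ i ∈ range (n+1), (bernoulli i) * (n.choose i) * 2^i = 0 := by
  have he : (2:ℚ)^n * (Polynomial.bernoulli n).eval (1/2 : ℚ)
      = ∑ i ∈ range (n+1), (bernoulli i) * (n.choose i) * 2^i := by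
    rw [Polynomial.bernoulli, Polynomial.eval_finset_sum, mul_sum]
    refine sum_congr rfl fun i hi => ?_
    rw [Polynomial.eval_monomial]
    rw [mem_range] at hi
    have h2 : (2:ℚ)^n * (1/2:ℚ)^(n-i) = 2^i := by
      have hp : (2:ℚ)^n = 2^i * 2^(n-i) := by
        rw [← pow_add]; congr 1; omega
      rw [hp, mul_assoc, one_div, inv_pow, mul_inv_cancel₀ (by positivity), mul_one]
    linear_combination (bernoulli i * (n.choose i : ℚ)) * h2
  rw [← he, bern_eval_half_odd hn, mul_zero]

lemma sum_even_of_odd_zero (g : ℕ → ℚ) (h : ∀ j, Odd j → g j = 0) (r : ℕ) :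
    ∑ j ∈ range (2*r), g j = ∑ i ∈ range r, g (2*i) := by
  induction r with
  | zero => simp
  | succ r ih =>
    rw [show 2*(r+1) = (2*r+1)+1 by ring, sum_range_succ, sum_range_succ, sum_range_succ, ih,
      h (2*r+1) ⟨r, by ring⟩, add_zero]

lemma L1Q (r : ℕ) :
    ∑ i ∈ range (r+1), (bernoulli (2*i)) * (2 - 2^(2*i)) * ((2*r+1).choose (2*i))
      = if r = 0 then 1 else 0 := by
  rcases eq_or_ne r 0 with rfl | hr
  · norm_num
  set g : ℕ → ℚ := fun j => bernoulli j * (2 - 2^j) * ((2*r+1).choose j) with hg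
  have hodd : ∀ j, Odd j → g j = 0 := by
    intro j hj
    rcases eq_or_ne j 1 with rfl | h1
    · simp [hg]
    · simp [hg, bernoulli_odd_zero hj h1]
  have hsplit : ∑ i ∈ range (r+1), g (2*i) = ∑ j ∈ range (2*(r+1)), g j :=
    (sum_even_of_odd_zero g hodd (r+1)).symm
  have h2 : ∑ j ∈ range (2*(r+1)), g j = 0 := by
    have hexp : ∀ j, g j = 2 * (((2*r+1).choose j : ℚ) * bernoulli j)
        - (bernoulli j * ((2*r+1).choose j) * 2^j) := by
      intro j; simp only [hg]; ring
    rw [sum_congr rfl fun j _ => hexp j, sum_sub_distrib, ← mul_sum]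
    have e1 : ∑ j ∈ range (2*(r+1)), (((2*r+1).choose j : ℚ) * bernoulli j) = 0 := by
      rw [show 2*(r+1) = (2*r+1)+1 by ring, sum_range_succ,
        bernoulli_odd_zero ⟨r, by ring⟩ (by omega), mul_zero, add_zero, sum_bernoulli]
      simp [show ¬ (2*r+1 = 1) by omega, hr]
    have e2 : ∑ j ∈ range (2*(r+1)), (bernoulli j * ((2*r+1).choose j) * 2^j) = 0 := by
      rw [show 2*(r+1) = (2*r+1)+1 by ring]
      exact sum_choose_two_pow_bernoulli ⟨r, by ring⟩
    rw [e1, e2, mul_zero, sub_zero]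
  simp only [hg] at hsplit h2
  rw [hsplit, h2, if_neg hr]

open Finset Real MeasureTheory intervalIntegral

lemma cosInt {c : ℝ} (hc : c ≠ 0) (hs : Real.sin c = 0) :
    ∫ u in (0:ℝ)..1, Real.cos (c*u) = 0 := by
  rw [intervalIntegral.integral_comp_mul_left Real.cos hc]
  simp [integral_cos, hs]

lemma sinInt {c : ℝ} (hc : c ≠ 0) (hcos : Real.cos c = 1) :
    ∫ u in (0:ℝ)..1, Real.sin (c*u) = 0 := by
  rw [intervalIntegral.integral_comp_mul_left Real.sin hc]
  simp [integral_sin, hcos]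

lemma hasDeriv_pow_one_sub (p : ℕ) (x : ℝ) :
    HasDerivAt (fun x : ℝ => (1-x)^p) (-(p * (1-x)^(p-1))) x := by
  have h1 : HasDerivAt (fun x : ℝ => 1 - x) (-1) x := (hasDerivAt_id x).const_sub 1
  have := h1.pow p
  exact this.congr_deriv (by ring)

lemma Arec {c : ℝ} (hc : c ≠ 0) (hs : Real.sin c = 0) (p : ℕ) :
    ∫ u in (0:ℝ)..1, (1-u)^(p+1) * Real.cos (c*u)
      = ((p+1 : ℝ)/c) * ∫ u in (0:ℝ)..1, (1-u)^p * Real.sin (c*u) := by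
  have key := intervalIntegral.integral_mul_deriv_eq_deriv_mul
    (u := fun x : ℝ => (1-x)^(p+1)) (u' := fun x : ℝ => -((p+1) * (1-x)^p))
    (v := fun x : ℝ => Real.sin (c*x) / c) (v' := fun x : ℝ => Real.cos (c*x))
    (a := (0:ℝ)) (b := 1)
    (fun x _ => by simpa using hasDeriv_pow_one_sub (p+1) x)
    (fun x _ => by
      have h1 : HasDerivAt (fun x : ℝ => c * x) c x := by
        simpa using (hasDerivAt_id x).const_mul c
      have := (h1.sin).div_const c
      convert this using 1
      field_simp)
    (by apply Continuous.intervalIntegrable; continuity)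
    (by apply Continuous.intervalIntegrable; continuity)
  rw [key]
  have : ∫ x in (0:ℝ)..1, -((p+1 : ℝ) * (1-x)^p) * (Real.sin (c*x) / c)
      = (-(p+1:ℝ)/c) * ∫ x in (0:ℝ)..1, (1-x)^p * Real.sin (c*x) := by
    rw [← intervalIntegral.integral_const_mul]
    congr 1; funext x; ring
  rw [this]
  simp [hs]
  ring

lemma Brec {c : ℝ} (hc : c ≠ 0) (p : ℕ) :
    ∫ u in (0:ℝ)..1, (1-u)^(p+1) * Real.sin (c*u)
      = 1/c - ((p+1 : ℝ)/c) * ∫ u in (0:ℝ)..1, (1-u)^p * Real.cos (c*u) := by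
  have key := intervalIntegral.integral_mul_deriv_eq_deriv_mul
    (u := fun x : ℝ => (1-x)^(p+1)) (u' := fun x : ℝ => -((p+1) * (1-x)^p))
    (v := fun x : ℝ => -(Real.cos (c*x) / c)) (v' := fun x : ℝ => Real.sin (c*x))
    (a := (0:ℝ)) (b := 1)
    (fun x _ => by simpa using hasDeriv_pow_one_sub (p+1) x)
    (fun x _ => by
      have h1 : HasDerivAt (fun x : ℝ => c * x) c x := by
        simpa using (hasDerivAt_id x).const_mul c
      have := ((h1.cos).div_const c).neg
      exact this.congr_deriv (by field_simp))
    (by apply Continuous.intervalIntegrable; continuity)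
    (by apply Continuous.intervalIntegrable; continuity)
  rw [key]
  have : ∫ x in (0:ℝ)..1, -((p+1 : ℝ) * (1-x)^p) * (-(Real.cos (c*x) / c))
      = ((p+1:ℝ)/c) * ∫ x in (0:ℝ)..1, (1-x)^p * Real.cos (c*x) := by
    rw [← intervalIntegral.integral_const_mul]
    congr 1; funext x; ring
  rw [this]
  simp

lemma Akey {c : ℝ} (hc : c ≠ 0) (hs : Real.sin c = 0) (q : ℕ) :
    (∫ u in (0:ℝ)..1, (1-u)^(2*q+2) * Real.cos (c*u)) / (Nat.factorial (2*q+2) : ℝ)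
      = 1/(c^2 * (Nat.factorial (2*q+1)))
        - (∫ u in (0:ℝ)..1, (1-u)^(2*q) * Real.cos (c*u)) / (c^2 * (Nat.factorial (2*q))) := by
  have h1 := Arec hc hs (2*q+1)
  have h2 := Brec hc (2*q)
  rw [h2] at h1
  rw [show 2*q+1+1 = 2*q+2 from rfl] at h1
  rw [h1]
  have hf1 : (Nat.factorial (2*q+2) : ℝ) = (2*q+2) * ((2*q+1) * (Nat.factorial (2*q))) := by
    rw [Nat.factorial_succ, Nat.factorial_succ]; push_cast; ring
  have hf2 : (Nat.factorial (2*q+1) : ℝ) = (2*q+1) * (Nat.factorial (2*q)) := by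
    rw [Nat.factorial_succ]; push_cast; ring
  have hfne : (Nat.factorial (2*q) : ℝ) ≠ 0 := Nat.cast_ne_zero.mpr (Nat.factorial_ne_zero _)
  rw [hf1, hf2]
  have h2q1 : ((2*q:ℝ)+1) ≠ 0 := by positivity
  have h2q2 : ((2*q:ℝ)+2) ≠ 0 := by positivity
  set I := ∫ u in (0:ℝ)..1, (1-u)^(2*q) * Real.cos (c*u)
  push_cast
  field_simp
  ring
lemma L1Qdiv (r : ℕ) :
    ∑ i ∈ range (r+1),
        (bernoulli (2*i)) * (2 - 2^(2*i)) / ((Nat.factorial (2*i)) * (Nat.factorial (2*(r-i)+1)))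
      = if r = 0 then 1 else 0 := by
  have hq := L1Q r
  have hfac : ((2*r+1).factorial : ℚ) ≠ 0 := Nat.cast_ne_zero.mpr (Nat.factorial_ne_zero _)
  have key : ∀ i ∈ range (r+1),
      (bernoulli (2*i)) * (2 - 2^(2*i)) / ((Nat.factorial (2*i)) * (Nat.factorial (2*(r-i)+1)))
        = (bernoulli (2*i)) * (2 - 2^(2*i)) * ((2*r+1).choose (2*i)) / ((2*r+1).factorial) := by
    intro i hi
    rw [mem_range] at hi
    rw [Nat.cast_choose ℚ (by omega : 2*i ≤ 2*r+1)]
    rw [show (2*r+1) - 2*i = 2*(r-i)+1 by omega]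
    have h1 : ((2*i).factorial : ℚ) ≠ 0 := Nat.cast_ne_zero.mpr (Nat.factorial_ne_zero _)
    have h2 : ((2*(r-i)+1).factorial : ℚ) ≠ 0 := Nat.cast_ne_zero.mpr (Nat.factorial_ne_zero _)
    field_simp
  rw [sum_congr rfl key, ← sum_div, hq]
  rcases eq_or_ne r 0 with rfl | hr
  · norm_num
  · simp [hr]

lemma L1R (r : ℕ) :
    ∑ i ∈ range (r+1),
        ((bernoulli (2*i) : ℝ)) * (2 - 2^(2*i)) / ((Nat.factorial (2*i)) * (Nat.factorial (2*(r-i)+1)))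
      = if r = 0 then 1 else 0 := by
  have := congrArg (fun q : ℚ => (q : ℝ)) (L1Qdiv r)
  push_cast at this
  rw [this]
  split <;> norm_num

lemma Trec {c : ℝ} (hc : c ≠ 0) (hs : Real.sin c = 0) (k : ℕ) :
    (∑ i ∈ range (k+2), (bernoulli (2*i):ℝ) * (2-2^(2*i))
        / ((Nat.factorial (2*i)) * (Nat.factorial (2*((k+1)-i))))
        * (∫ u in (0:ℝ)..1, (1-u)^(2*((k+1)-i)) * Real.cos (c*u)))
    = (if k = 0 then 1 else 0)/c^2
      - (∑ i ∈ range (k+1), (bernoulli (2*i):ℝ) * (2-2^(2*i))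
          / ((Nat.factorial (2*i)) * (Nat.factorial (2*(k-i))))
          * (∫ u in (0:ℝ)..1, (1-u)^(2*(k-i)) * Real.cos (c*u)))/c^2 := by
  rw [sum_range_succ]
  have hlast : (bernoulli (2*(k+1)):ℝ) * (2-2^(2*(k+1)))
      / ((Nat.factorial (2*(k+1))) * (Nat.factorial (2*((k+1)-(k+1)))))
      * (∫ u in (0:ℝ)..1, (1-u)^(2*((k+1)-(k+1))) * Real.cos (c*u)) = 0 := by
    rw [Nat.sub_self, mul_zero]
    simp only [pow_zero, one_mul]
    rw [cosInt hc hs, mul_zero]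
  rw [hlast, add_zero]
  have step : ∀ i ∈ range (k+1),
      (bernoulli (2*i):ℝ) * (2-2^(2*i))
        / ((Nat.factorial (2*i)) * (Nat.factorial (2*((k+1)-i))))
        * (∫ u in (0:ℝ)..1, (1-u)^(2*((k+1)-i)) * Real.cos (c*u))
      = (bernoulli (2*i):ℝ) * (2-2^(2*i))
          / ((Nat.factorial (2*i)) * (Nat.factorial (2*(k-i)+1))) / c^2
        - (bernoulli (2*i):ℝ) * (2-2^(2*i))
            / ((Nat.factorial (2*i)) * (Nat.factorial (2*(k-i))))
            * (∫ u in (0:ℝ)..1, (1-u)^(2*(k-i)) * Real.cos (c*u)) / c^2 := by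
    intro i hi
    rw [mem_range] at hi
    rw [show 2*((k+1)-i) = 2*(k-i)+2 by omega]
    have hA := Akey hc hs (k-i)
    calc (bernoulli (2*i):ℝ) * (2-2^(2*i))
          / ((Nat.factorial (2*i)) * (Nat.factorial (2*(k-i)+2)))
          * (∫ u in (0:ℝ)..1, (1-u)^(2*(k-i)+2) * Real.cos (c*u))
        = (bernoulli (2*i):ℝ) * (2-2^(2*i)) / (Nat.factorial (2*i))
            * ((∫ u in (0:ℝ)..1, (1-u)^(2*(k-i)+2) * Real.cos (c*u))
                / (Nat.factorial (2*(k-i)+2))) := by ring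
      _ = (bernoulli (2*i):ℝ) * (2-2^(2*i)) / (Nat.factorial (2*i))
            * (1/(c^2 * (Nat.factorial (2*(k-i)+1)))
              - (∫ u in (0:ℝ)..1, (1-u)^(2*(k-i)) * Real.cos (c*u))
                  / (c^2 * (Nat.factorial (2*(k-i))))) := by rw [hA]
      _ = _ := by ring
  rw [sum_congr rfl step, sum_sub_distrib, ← sum_div, ← sum_div, L1R k]

lemma Tval {c : ℝ} (hc : c ≠ 0) (hs : Real.sin c = 0) (k : ℕ) :
    (∑ i ∈ range (k+2), (bernoulli (2*i):ℝ) * (2-2^(2*i))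
        / ((Nat.factorial (2*i)) * (Nat.factorial (2*((k+1)-i))))
        * (∫ u in (0:ℝ)..1, (1-u)^(2*((k+1)-i)) * Real.cos (c*u)))
    = (-1:ℝ)^k / c^(2*k+2) := by
  induction k with
  | zero =>
    rw [Trec hc hs 0]
    have hT0 : (∑ i ∈ range (0+1), (bernoulli (2*i):ℝ) * (2-2^(2*i))
        / ((Nat.factorial (2*i)) * (Nat.factorial (2*(0-i))))
        * (∫ u in (0:ℝ)..1, (1-u)^(2*(0-i)) * Real.cos (c*u))) = 0 := by
      rw [sum_range_one]
      simp only [Nat.sub_self, mul_zero, pow_zero, one_mul]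
      rw [cosInt hc hs, mul_zero]
    rw [hT0]
    norm_num
  | succ k ih =>
    rw [Trec hc hs (k+1), ih]
    simp only [Nat.succ_ne_zero, if_false]
    rw [zero_div, zero_sub, div_div, ← pow_add]
    rw [show 2*k+2+2 = 2*(k+1)+2 by ring, pow_succ]
    ring

lemma intP (K : ℕ) {c : ℝ} (hc : c ≠ 0) (hs : Real.sin c = 0) :
    (∫ u in (0:ℝ)..1, (∑ j ∈ range ((K+1)+1),
        (bernoulli (2*j):ℝ) * (2-2^(2*j)) * (1-u)^(2*(K+1)-2*j)
          / ((Nat.factorial (2*j)) * (Nat.factorial (2*(K+1)-2*j)))) * Real.cos (c*u))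
    = (-1:ℝ)^(K+1+1) / c^(2*(K+1)) := by
  simp_rw [Finset.sum_mul]
  rw [intervalIntegral.integral_finset_sum (fun j hj => by
    apply Continuous.intervalIntegrable (μ := MeasureTheory.volume); fun_prop)]
  have step : ∀ j ∈ range (K+2),
      (∫ u in (0:ℝ)..1, (bernoulli (2*j):ℝ) * (2-2^(2*j)) * (1-u)^(2*(K+1)-2*j)
          / ((Nat.factorial (2*j)) * (Nat.factorial (2*(K+1)-2*j))) * Real.cos (c*u))
      = (bernoulli (2*j):ℝ) * (2-2^(2*j))
          / ((Nat.factorial (2*j)) * (Nat.factorial (2*((K+1)-j))))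
          * (∫ u in (0:ℝ)..1, (1-u)^(2*((K+1)-j)) * Real.cos (c*u)) := by
    intro j hj
    rw [mem_range] at hj
    rw [show 2*(K+1) - 2*j = 2*((K+1)-j) by omega]
    rw [← intervalIntegral.integral_const_mul]
    congr 1; funext u; ring
  rw [sum_congr rfl step, Tval hc hs K]
  rw [show K+1+1 = K+2 from rfl, show 2*(K+1) = 2*K+2 by ring, pow_succ, pow_succ]
  ring

lemma trigid (A B u : ℝ) (n : ℕ) (hsin : Real.sin (π*A*u) ≠ 0) :
    Real.cos (π*(A*n+2*B)*u) * Real.sin (π*A*n*u) * Real.cot (π*A*u)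
    = ∑ j ∈ range n, (1/2) * (Real.cos (2*π*(A*((j+1:ℕ))+B)*u) + Real.cos (2*π*(A*j+B)*u)) := by
  set f : ℕ → ℝ := fun j => Real.sin (2*π*(A*j+B)*u) with hf
  have key : ∀ j : ℕ, f (j+1) - f j
      = 2 * Real.sin (π*A*u) * Real.cos (π*(A*(2*j+1)+2*B)*u) := by
    intro j
    rw [hf]
    simp only []
    rw [Real.sin_sub_sin,
      show (2*π*(A*((j+1:ℕ))+B)*u - 2*π*(A*j+B)*u)/2 = π*A*u by push_cast; ring,
      show (2*π*(A*((j+1:ℕ))+B)*u + 2*π*(A*j+B)*u)/2 = π*(A*(2*j+1)+2*B)*u by push_cast; ring]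
  have key2 : ∀ j : ℕ, (1:ℝ)/2 * (Real.cos (2*π*(A*((j+1:ℕ))+B)*u) + Real.cos (2*π*(A*j+B)*u))
      = Real.cos (π*A*u) * Real.cos (π*(A*(2*j+1)+2*B)*u) := by
    intro j
    rw [Real.cos_add_cos,
      show (2*π*(A*((j+1:ℕ))+B)*u + 2*π*(A*j+B)*u)/2 = π*(A*(2*j+1)+2*B)*u by push_cast; ring,
      show (2*π*(A*((j+1:ℕ))+B)*u - 2*π*(A*j+B)*u)/2 = π*A*u by push_cast; ring]
    ring
  have tele : f n - f 0 = ∑ j ∈ range n, (f (j+1) - f j) := (Finset.sum_range_sub f n).symm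
  have h4 : Real.cos (π*(A*n+2*B)*u) * Real.sin (π*A*n*u) = (f n - f 0)/2 := by
    rw [hf]
    simp only []
    rw [Real.sin_sub_sin,
      show (2*π*(A*n+B)*u - 2*π*(A*(0:ℕ)+B)*u)/2 = π*A*n*u by push_cast; ring,
      show (2*π*(A*n+B)*u + 2*π*(A*(0:ℕ)+B)*u)/2 = π*(A*n+2*B)*u by push_cast; ring]
    ring
  rw [Real.cot_eq_cos_div_sin, ← mul_div_assoc, h4, tele,
    Finset.sum_congr rfl (fun j _ => key j), ← Finset.mul_sum,
    Finset.sum_congr rfl (fun j _ => key2 j), ← Finset.mul_sum]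
  field_simp

lemma intMain (a b : ℤ) (ha : a ≠ 0) (n K : ℕ)
    (hm : ∀ j : ℕ, j ≤ n → (a*(j:ℤ)+b) ≠ 0) :
    (∫ u in (0:ℝ)..1,
      (∑ j ∈ Finset.range ((K+1) + 1),
          (bernoulli (2 * j) : ℝ) * (2 - 2 ^ (2 * j)) * (1 - u) ^ (2 * (K+1) - 2 * j) /
            ((Nat.factorial (2 * j)) * (Nat.factorial (2 * (K+1) - 2 * j)))) *
        Real.cos (π * (a * n + 2 * b) * u) * Real.sin (π * a * n * u) *
        Real.cot (π * a * u))
    = ∑ j ∈ range n, (1/2) * ((-1:ℝ)^(K+1+1)/(2*π*((a:ℝ)*((j+1:ℕ))+b))^(2*(K+1))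
        + (-1:ℝ)^(K+1+1)/(2*π*((a:ℝ)*j+b))^(2*(K+1))) := by
  have hπ : (π:ℝ) ≠ 0 := Real.pi_ne_zero
  have haR : ((a:ℝ)) ≠ 0 := Int.cast_ne_zero.mpr ha
  set P : ℝ → ℝ := fun u => ∑ j ∈ Finset.range ((K+1) + 1),
      (bernoulli (2 * j) : ℝ) * (2 - 2 ^ (2 * j)) * (1 - u) ^ (2 * (K+1) - 2 * j) /
        ((Nat.factorial (2 * j)) * (Nat.factorial (2 * (K+1) - 2 * j))) with hP
  have hPcont : Continuous P := by
    rw [hP]; fun_prop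
  have hcne : ∀ j : ℕ, j ≤ n → (2*π*((a:ℝ)*j+b)) ≠ 0 := by
    intro j hj
    have h1 : ((a*(j:ℤ)+b : ℤ):ℝ) ≠ 0 := Int.cast_ne_zero.mpr (hm j hj)
    push_cast at h1
    intro hcon
    rcases mul_eq_zero.mp hcon with h' | h'
    · exact absurd h' (by positivity)
    · exact h1 h'
  have hsin0 : ∀ j : ℕ, Real.sin (2*π*((a:ℝ)*j+b)) = 0 := by
    intro j
    have he : 2*π*((a:ℝ)*j+b) = ((2*(a*(j:ℤ)+b) : ℤ):ℝ)*π := by push_cast; ring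
    rw [he, Real.sin_int_mul_pi]
  have hint : ∀ j : ℕ, j ≤ n →
      (∫ u in (0:ℝ)..1, P u * Real.cos (2*π*((a:ℝ)*j+b)*u))
        = (-1:ℝ)^(K+1+1)/(2*π*((a:ℝ)*j+b))^(2*(K+1)) := by
    intro j hj
    rw [hP]
    exact intP K (hcne j hj) (hsin0 j)
  -- step 1 : replace the integrand a.e.
  have hnull : MeasureTheory.volume {u : ℝ | Real.sin (π*(a:ℝ)*u) = 0} = 0 := by
    apply Set.Countable.measure_zero
    apply Set.Countable.mono ?_ (Set.countable_range (fun m : ℤ => (m:ℝ)/(a:ℝ)))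
    intro u hu
    obtain ⟨m, hmu⟩ := Real.sin_eq_zero_iff.mp hu
    refine ⟨m, ?_⟩
    field_simp
    have h1 : π * (m:ℝ) = π * ((a:ℝ)*u) := by linear_combination hmu
    have h2 := mul_left_cancel₀ hπ h1
    linarith [h2]
  have hstep1 : (∫ u in (0:ℝ)..1,
        P u * Real.cos (π * (a * n + 2 * b) * u) * Real.sin (π * a * n * u) *
          Real.cot (π * a * u))
      = ∫ u in (0:ℝ)..1, ∑ j ∈ range n,
          P u * ((1/2) * (Real.cos (2*π*((a:ℝ)*((j+1:ℕ))+b)*u) + Real.cos (2*π*((a:ℝ)*j+b)*u))) := by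
    apply intervalIntegral.integral_congr_ae
    rw [MeasureTheory.ae_iff]
    refine MeasureTheory.measure_mono_null (fun u hu => ?_) hnull
    simp only [Set.mem_setOf_eq] at hu ⊢
    by_contra hcon
    apply hu
    intro _
    have ht := trigid (a:ℝ) (b:ℝ) u n hcon
    calc P u * Real.cos (π * (a * n + 2 * b) * u) * Real.sin (π * a * n * u) *
          Real.cot (π * a * u)
        = P u * (Real.cos (π * ((a:ℝ) * n + 2 * b) * u) * Real.sin (π * (a:ℝ) * n * u) *
            Real.cot (π * (a:ℝ) * u)) := by ring
      _ = P u * ∑ j ∈ range n, (1/2) * (Real.cos (2*π*((a:ℝ)*((j+1:ℕ))+b)*u)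
            + Real.cos (2*π*((a:ℝ)*j+b)*u)) := by rw [ht]
      _ = _ := by rw [Finset.mul_sum]
  rw [hstep1]
  rw [intervalIntegral.integral_finset_sum (fun j hj => by
    apply Continuous.intervalIntegrable (μ := MeasureTheory.volume); fun_prop)]
  refine sum_congr rfl (fun j hj => ?_)
  rw [mem_range] at hj
  have e : ∀ u : ℝ, P u * ((1/2) * (Real.cos (2*π*((a:ℝ)*((j+1:ℕ))+b)*u)
        + Real.cos (2*π*((a:ℝ)*j+b)*u)))
      = (1/2) * (P u * Real.cos (2*π*((a:ℝ)*((j+1:ℕ))+b)*u))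
        + (1/2) * (P u * Real.cos (2*π*((a:ℝ)*j+b)*u)) := by intro u; ring
  rw [intervalIntegral.integral_congr (g := fun u => (1/2) * (P u * Real.cos (2*π*((a:ℝ)*((j+1:ℕ))+b)*u))
        + (1/2) * (P u * Real.cos (2*π*((a:ℝ)*j+b)*u))) (fun u _ => e u)]
  rw [intervalIntegral.integral_add
      (by apply IntervalIntegrable.const_mul; apply Continuous.intervalIntegrable (μ := MeasureTheory.volume); fun_prop)
      (by apply IntervalIntegrable.const_mul; apply Continuous.intervalIntegrable (μ := MeasureTheory.volume); fun_prop),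
    intervalIntegral.integral_const_mul, intervalIntegral.integral_const_mul,
    hint (j+1) (by omega), hint j (by omega)]
  ring

theorem stmt_6 (a b : ℤ) (ha : a ≠ 0) (hb : b ≠ 0) (n : ℕ) (hn : 0 < n)
    (h : ∀ j : ℤ, 1 ≤ j → j ≤ n → a * j + b ≠ 0) (k : ℕ) (hk : 0 < k) :
    ∑ j ∈ Finset.Icc 1 n, (1 : ℝ) / (a * j + b) ^ (2 * k) =
      -(1 / (2 * (b : ℝ) ^ (2 * k))) + 1 / (2 * ((a : ℝ) * n + b) ^ (2 * k))
      - (-1 : ℝ) ^ k * (2 * π) ^ (2 * k) *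
          ∫ u in (0:ℝ)..1,
            (∑ j ∈ Finset.range (k + 1),
                (bernoulli (2 * j) : ℝ) * (2 - 2 ^ (2 * j)) * (1 - u) ^ (2 * k - 2 * j) /
                  ((Nat.factorial (2 * j)) * (Nat.factorial (2 * k - 2 * j)))) *
              Real.cos (π * (a * n + 2 * b) * u) * Real.sin (π * a * n * u) *
              Real.cot (π * a * u) := by
  obtain ⟨K, rfl⟩ : ∃ K, k = K+1 := ⟨k-1, by omega⟩
  have hm : ∀ j : ℕ, j ≤ n → (a*(j:ℤ)+b) ≠ 0 := by
    intro j hj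
    rcases Nat.eq_zero_or_pos j with rfl | hjpos
    · simpa using hb
    · exact h j (by exact_mod_cast hjpos) (by exact_mod_cast hj)
  rw [intMain a b ha n K hm]
  set S : ℕ → ℝ := fun j => 1/((a:ℝ)*j+b)^(2*(K+1)) with hS
  have key : ∀ j ∈ range n, (-1:ℝ)^(K+1) * (2*π)^(2*(K+1)) *
      ((1/2) * ((-1:ℝ)^(K+1+1)/(2*π*((a:ℝ)*((j+1:ℕ))+b))^(2*(K+1))
        + (-1:ℝ)^(K+1+1)/(2*π*((a:ℝ)*j+b))^(2*(K+1))))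
      = -((1/2) * (S (j+1) + S j)) := by
    intro j hj
    rw [mem_range] at hj
    have hx1 : ((a:ℝ)*((j:ℝ)+1)+b) ≠ 0 := by
      have h0 : ((a*((j:ℤ)+1)+b : ℤ):ℝ) ≠ 0 := Int.cast_ne_zero.mpr
        (by have := hm (j+1) (by omega); push_cast at this ⊢; exact_mod_cast this)
      push_cast at h0
      exact h0
    have hx2 : ((a:ℝ)*(j:ℝ)+b) ≠ 0 := by
      have h0 : ((a*(j:ℤ)+b : ℤ):ℝ) ≠ 0 := Int.cast_ne_zero.mpr (hm j (by omega))
      push_cast at h0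
      exact h0
    have hπ2 : (2*π:ℝ) ≠ 0 := by positivity
    rw [hS]
    simp only []
    push_cast
    rw [mul_pow (2*π) ((a:ℝ)*((j:ℝ)+1)+b), mul_pow (2*π) ((a:ℝ)*(j:ℝ)+b)]
    rcases neg_one_pow_eq_or ℝ K with hε | hε <;>
      (rw [pow_succ, pow_succ, pow_succ, hε]; field_simp <;> ring)
  have htel : ∑ j ∈ range n, -((1/2) * (S (j+1) + S j))
      = -(∑ j ∈ range n, S (j+1)) + (1/2) * (S n - S 0) := by
    have h1 := Finset.sum_range_sub S n
    have h2 : ∀ j ∈ range n, -((1/2)*(S (j+1)+S j))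
        = -(S (j+1)) + (1/2)*(S (j+1) - S j) := by intro j _; ring
    rw [sum_congr rfl h2, sum_add_distrib, ← mul_sum, h1, sum_neg_distrib]
  have hLHS : ∑ j ∈ Finset.Icc 1 n, (1:ℝ)/((a:ℝ)*(j:ℕ)+b)^(2*(K+1))
      = ∑ j ∈ range n, S (j+1) := by
    rw [← Finset.Ico_add_one_right_eq_Icc, Finset.sum_Ico_eq_sum_range]
    refine sum_congr rfl (fun i _ => ?_)
    rw [hS]
    simp only []
    push_cast
    ring
  rw [Finset.mul_sum, sum_congr rfl key, htel, hLHS]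
  have hS0 : S 0 = 1/(b:ℝ)^(2*(K+1)) := by rw [hS]; norm_num
  have hSn : S n = 1/((a:ℝ)*n+b)^(2*(K+1)) := by rw [hS]
  rw [hS0, hSn]
  set Z := ∑ j ∈ range n, S (j+1) with hZ
  have h2 : ∀ x : ℝ, 1/(2*x) = 1/2*(1/x) := fun x => by rw [one_div, mul_inv]; ring
  rw [h2, h2]
  ring
end

section
/- Let a and b be nonzero integers, n a positive integer such that aj + b ≠ 0 for every integer j with 1 ≤ j ≤ n, and k a nonnegative integer. Writing HP_{r}(n) = ∑_{j=1}^{n} 1/(aj+b)^{r}, the following recursion holds: HP_{2k+1}(n) = -(1/(2b^{2k+1})) ∑_{j=0}^{k} (-1)^{j}(2πb)^{2j}/(2j+1)! + (1/(2(an+b)^{2k+1})) ∑_{j=0}^{k} (-1)^{j}(2π(an+b))^{2j}/(2j+1)! - ∑_{j=0}^{k-1} ((-1)^{k-j}(2π)^{2k-2j}/(2k+1-2j)!)·HP_{2j+1}(n) + ((-1)^{k}(2π)^{2k+1}/(2k+1)!) ∫_{0}^{1} (1-u)^{2k+1}·sin(π(an+2b)u)·sin(πanu)·cot(πau) du. 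-/
open Real

section Aux

lemma aux_cos_int (c : ℝ) (hc : c ≠ 0) :
    ∫ u in (0:ℝ)..1, Real.cos (c * u) = Real.sin c / c := by
  have := intervalIntegral.integral_comp_mul_left (fun x => Real.cos x) hc (a := (0:ℝ)) (b := 1)
  simp at this
  rw [this]; ring

lemma hd_pow (p : ℕ) (x : ℝ) :
    HasDerivAt (fun x : ℝ => (1 - x) ^ (p+1)) (-((p+1) * (1-x)^p)) x := by
  have h1 : HasDerivAt (fun x : ℝ => 1 - x) (-1) x := by
    simpa using (hasDerivAt_id x).const_sub 1
  simpa [mul_comm, mul_assoc, mul_left_comm] using h1.fun_pow (p+1)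

lemma hd_sin (c : ℝ) (hc : c ≠ 0) (x : ℝ) :
    HasDerivAt (fun x : ℝ => Real.sin (c * x) / c) (Real.cos (c * x)) x := by
  have h1 : HasDerivAt (fun x : ℝ => Real.sin (c * x)) (Real.cos (c * x) * c) x := by
    simpa [Function.comp_def] using (Real.hasDerivAt_sin (c * x)).comp x ((hasDerivAt_id x).const_mul c)
  simpa [mul_div_assoc, mul_div_cancel_right₀, hc] using h1.div_const c

lemma hd_negcos (c : ℝ) (hc : c ≠ 0) (x : ℝ) :
    HasDerivAt (fun x : ℝ => -(Real.cos (c * x) / c)) (Real.sin (c * x)) x := by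
  have h1 : HasDerivAt (fun x : ℝ => Real.cos (c * x)) (-Real.sin (c * x) * c) x := by
    simpa [Function.comp_def] using (Real.hasDerivAt_cos (c * x)).comp x ((hasDerivAt_id x).const_mul c)
  have := (h1.div_const c).fun_neg
  simpa [neg_mul, neg_div, mul_div_assoc, mul_div_cancel_right₀, hc] using this

lemma ibp_sin (p : ℕ) (c : ℝ) (hc : c ≠ 0) :
    ∫ u in (0:ℝ)..1, (1-u)^(p+1) * Real.sin (c*u)
      = 1/c - ((p+1)/c) * ∫ u in (0:ℝ)..1, (1-u)^p * Real.cos (c*u) := by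
  have H := intervalIntegral.integral_mul_deriv_eq_deriv_mul
    (u := fun x : ℝ => (1-x)^(p+1)) (u' := fun x : ℝ => -((p+1) * (1-x)^p))
    (v := fun x : ℝ => -(Real.cos (c*x) / c)) (v' := fun x : ℝ => Real.sin (c*x))
    (a := 0) (b := 1)
    (fun x _ => hd_pow p x) (fun x _ => hd_negcos c hc x)
    (by apply Continuous.intervalIntegrable; fun_prop)
    (by apply Continuous.intervalIntegrable; fun_prop)
  rw [H]
  simp
  rw [← intervalIntegral.integral_const_mul]
  exact intervalIntegral.integral_congr (fun x _ => by ring)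

lemma ibp_cos (p : ℕ) (c : ℝ) (hc : c ≠ 0) :
    ∫ u in (0:ℝ)..1, (1-u)^(p+1) * Real.cos (c*u)
      = ((p+1)/c) * ∫ u in (0:ℝ)..1, (1-u)^p * Real.sin (c*u) := by
  have H := intervalIntegral.integral_mul_deriv_eq_deriv_mul
    (u := fun x : ℝ => (1-x)^(p+1)) (u' := fun x : ℝ => -((p+1) * (1-x)^p))
    (v := fun x : ℝ => Real.sin (c*x) / c) (v' := fun x : ℝ => Real.cos (c*x))
    (a := 0) (b := 1)
    (fun x _ => hd_pow p x) (fun x _ => hd_sin c hc x)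
    (by apply Continuous.intervalIntegrable; fun_prop)
    (by apply Continuous.intervalIntegrable; fun_prop)
  rw [H]
  simp
  rw [← intervalIntegral.integral_const_mul]
  exact intervalIntegral.integral_congr (fun x _ => by ring)

lemma Fclosed (k : ℕ) (c : ℝ) (hc : c ≠ 0) (hs : Real.sin c = 0) :
    ∫ u in (0:ℝ)..1, (1-u)^(2*k+1) * Real.sin (c*u)
      = ∑ i ∈ Finset.range (k+1),
          (-1:ℝ)^i * ((Nat.factorial (2*k+1) : ℝ) / (Nat.factorial (2*k+1-2*i))) / c^(2*i+1) := by
  induction k with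
  | zero =>
      rw [show (2*0+1) = 0+1 by norm_num, ibp_sin 0 c hc]
      have h2 : ∫ u in (0:ℝ)..1, (1-u)^0 * Real.cos (c*u) = 0 := by
        simp only [pow_zero, one_mul]
        rw [aux_cos_int c hc, hs]; simp
      rw [h2]
      simp [Nat.factorial]
  | succ k ih =>
      have key : ∫ u in (0:ℝ)..1, (1-u)^(2*(k+1)+1) * Real.sin (c*u)
          = 1/c - ((2*k+3)/c) * (((2*k+2):ℝ)/c *
              ∑ i ∈ Finset.range (k+1),
                (-1:ℝ)^i * ((Nat.factorial (2*k+1) : ℝ) / (Nat.factorial (2*k+1-2*i))) / c^(2*i+1)) := by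
        rw [show 2*(k+1)+1 = (2*k+2)+1 by ring, ibp_sin (2*k+2) c hc,
          show 2*k+2 = (2*k+1)+1 by ring, ibp_cos (2*k+1) c hc, ih]
        push_cast; ring
      rw [key, Finset.sum_range_succ' _ (k+1)]
      have hterm : ∀ i ∈ Finset.range (k+1),
          (-1:ℝ)^(i+1) * ((Nat.factorial (2*(k+1)+1):ℝ) / (Nat.factorial (2*(k+1)+1-2*(i+1)))) / c^(2*(i+1)+1)
          = (-(((2*k+3):ℝ)/c * (((2*k+2):ℝ)/c))) *
              ((-1:ℝ)^i * ((Nat.factorial (2*k+1):ℝ)/(Nat.factorial (2*k+1-2*i)))/c^(2*i+1)) := by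
        intro i hi
        have h1 : 2*(k+1)+1-2*(i+1) = 2*k+1-2*i := by omega
        have h2 : (Nat.factorial (2*(k+1)+1) : ℝ) = (2*k+3)*((2*k+2)*(Nat.factorial (2*k+1))) := by
          rw [show 2*(k+1)+1 = (2*k+2)+1 by ring, Nat.factorial_succ,
            show 2*k+2 = (2*k+1)+1 by ring, Nat.factorial_succ]
          push_cast; ring
        have h3 : c^(2*(i+1)+1) = c^(2*i+1) * c^2 := by
          rw [← pow_add]; ring_nf
        rw [h1, h2, h3]
        have hf : (Nat.factorial (2*k+1-2*i) : ℝ) ≠ 0 := by positivity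
        field_simp
        ring
      rw [Finset.sum_congr rfl hterm, ← Finset.mul_sum]
      have hf0 : (-1:ℝ)^0 * ((Nat.factorial (2*(k+1)+1):ℝ)/(Nat.factorial (2*(k+1)+1-2*0)))/c^(2*0+1) = 1/c := by
        norm_num [div_self (show ((Nat.factorial (2*(k+1)+1)):ℝ) ≠ 0 from by positivity)]
      rw [hf0]
      ring

lemma trig_step (x y t : ℝ) :
    Real.sin (x+t) * Real.sin (y+t) * Real.cos t
      = Real.sin x * Real.sin y * Real.cos t
        + Real.sin t * (Real.sin (x+y+2*t) + Real.sin (x+y))/2 := by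
  have h1 := Real.sin_sq_add_cos_sq t
  simp only [Real.sin_add, Real.cos_add, Real.sin_two_mul, Real.cos_two_mul]
  linear_combination (Real.sin x * Real.sin y * Real.cos t) * h1

lemma trig_sum (a b : ℤ) (n : ℕ) (u : ℝ) :
    Real.sin (π * ((a:ℝ)*n + 2*b) * u) * Real.sin (π * (a:ℝ) * n * u) * Real.cos (π * (a:ℝ) * u)
      = Real.sin (π * (a:ℝ) * u) *
          ∑ j ∈ Finset.range n,
            (Real.sin ((2*π*((a:ℝ)*(j+1)+b)) * u) + Real.sin ((2*π*((a:ℝ)*j+b)) * u)) / 2 := by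
  induction n with
  | zero => simp
  | succ n ih =>
      rw [Finset.sum_range_succ, mul_add (Real.sin (π * (a:ℝ) * u)), ← ih]
      have hstep := trig_step (π*((a:ℝ)*n+2*b)*u) (π*(a:ℝ)*n*u) (π*(a:ℝ)*u)
      have e1 : π*((a:ℝ)*n+2*b)*u + π*(a:ℝ)*u = π*((a:ℝ)*(n+1:ℕ)+2*b)*u := by push_cast; ring
      have e2 : π*(a:ℝ)*n*u + π*(a:ℝ)*u = π*(a:ℝ)*(n+1:ℕ)*u := by push_cast; ring
      have e3 : π*((a:ℝ)*n+2*b)*u + π*(a:ℝ)*n*u + 2*(π*(a:ℝ)*u)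
          = (2*π*((a:ℝ)*(n+1)+b))*u := by ring
      have e4 : π*((a:ℝ)*n+2*b)*u + π*(a:ℝ)*n*u = (2*π*((a:ℝ)*n+b))*u := by ring
      rw [e1, e2, e3, e4] at hstep
      rw [hstep]
      ring

open MeasureTheory in
lemma null_set (a : ℤ) (ha : a ≠ 0) :
    volume {u : ℝ | Real.sin (π * (a:ℝ) * u) = 0} = 0 := by
  have hsub : {u : ℝ | Real.sin (π * (a:ℝ) * u) = 0} ⊆ Set.range (fun m : ℤ => (m:ℝ)/(a:ℝ)) := by
    intro u hu
    simp only [Set.mem_setOf_eq] at hu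
    rw [Real.sin_eq_zero_iff] at hu
    obtain ⟨m, hm⟩ := hu
    refine ⟨m, ?_⟩
    have hπ : (π:ℝ) ≠ 0 := Real.pi_ne_zero
    have haR : (a:ℝ) ≠ 0 := Int.cast_ne_zero.mpr ha
    field_simp
    nlinarith [hm, Real.pi_pos]
  exact measure_mono_null hsub ((Set.countable_range _).measure_zero _)

lemma trig_sum' (a b : ℤ) (n k : ℕ) (u : ℝ)
    (hu : Real.sin (π * (a:ℝ) * u) ≠ 0) :
    (1-u)^(2*k+1) * Real.sin (π * ((a:ℝ)*n + 2*b) * u) * Real.sin (π * (a:ℝ) * n * u)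
        * Real.cot (π * (a:ℝ) * u)
      = ∑ j ∈ Finset.range n,
          (1-u)^(2*k+1) *
            ((Real.sin ((2*π*((a:ℝ)*(j+1)+b)) * u) + Real.sin ((2*π*((a:ℝ)*j+b)) * u)) / 2) := by
  have h := trig_sum a b n u
  rw [Real.cot_eq_cos_div_sin]
  calc (1-u)^(2*k+1) * Real.sin (π * ((a:ℝ)*n + 2*b) * u) * Real.sin (π * (a:ℝ) * n * u)
        * (Real.cos (π * (a:ℝ) * u) / Real.sin (π * (a:ℝ) * u))
      = (1-u)^(2*k+1) * ((Real.sin (π * ((a:ℝ)*n + 2*b) * u) * Real.sin (π * (a:ℝ) * n * u)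
          * Real.cos (π * (a:ℝ) * u)) / Real.sin (π * (a:ℝ) * u)) := by ring
    _ = (1-u)^(2*k+1) * ((Real.sin (π * (a:ℝ) * u) * ∑ j ∈ Finset.range n,
          (Real.sin ((2*π*((a:ℝ)*(j+1)+b)) * u) + Real.sin ((2*π*((a:ℝ)*j+b)) * u)) / 2)
            / Real.sin (π * (a:ℝ) * u)) := by rw [h]
    _ = (1-u)^(2*k+1) * ∑ j ∈ Finset.range n,
          (Real.sin ((2*π*((a:ℝ)*(j+1)+b)) * u) + Real.sin ((2*π*((a:ℝ)*j+b)) * u)) / 2 := by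
            rw [mul_div_cancel_left₀ _ hu]
    _ = _ := Finset.mul_sum _ _ _

open MeasureTheory in
lemma integral_eq (a b : ℤ) (ha : a ≠ 0) (n k : ℕ) :
    (∫ u in (0:ℝ)..1, (1-u)^(2*k+1) * Real.sin (π * ((a:ℝ)*n + 2*b) * u)
        * Real.sin (π * (a:ℝ) * n * u) * Real.cot (π * (a:ℝ) * u))
      = ∑ j ∈ Finset.range n,
          ((1/2) * (∫ u in (0:ℝ)..1, (1-u)^(2*k+1) * Real.sin ((2*π*((a:ℝ)*(j+1)+b))*u))
            + (1/2) * (∫ u in (0:ℝ)..1, (1-u)^(2*k+1) * Real.sin ((2*π*((a:ℝ)*j+b))*u))) := by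
  have hcongr : (∫ u in (0:ℝ)..1, (1-u)^(2*k+1) * Real.sin (π * ((a:ℝ)*n + 2*b) * u)
        * Real.sin (π * (a:ℝ) * n * u) * Real.cot (π * (a:ℝ) * u))
      = ∫ u in (0:ℝ)..1, ∑ j ∈ Finset.range n,
          (1-u)^(2*k+1) *
            ((Real.sin ((2*π*((a:ℝ)*(j+1)+b)) * u) + Real.sin ((2*π*((a:ℝ)*j+b)) * u)) / 2) := by
    apply intervalIntegral.integral_congr_ae
    rw [MeasureTheory.ae_iff]
    apply measure_mono_null _ (null_set a ha)
    intro u hu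
    simp only [Set.mem_setOf_eq] at hu ⊢
    by_contra hsin
    exact hu fun _ => trig_sum' a b n k u hsin
  rw [hcongr, intervalIntegral.integral_finset_sum
    (fun j _ => (Continuous.intervalIntegrable (by fun_prop) _ _))]
  refine Finset.sum_congr rfl fun j _ => ?_
  rw [← intervalIntegral.integral_const_mul, ← intervalIntegral.integral_const_mul,
    ← intervalIntegral.integral_add
      ((Continuous.intervalIntegrable (by fun_prop) _ _))
      ((Continuous.intervalIntegrable (by fun_prop) _ _))]
  exact intervalIntegral.integral_congr fun u _ => by ring

lemma CS (k : ℕ) (x : ℝ) (hx : x ≠ 0) :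
    ((-1:ℝ)^k * (2*π)^(2*k+1) / (Nat.factorial (2*k+1))) *
      (∑ i ∈ Finset.range (k+1),
        (-1:ℝ)^i * ((Nat.factorial (2*k+1):ℝ)/(Nat.factorial (2*k+1-2*i))) / (2*π*x)^(2*i+1))
    = ∑ i ∈ Finset.range (k+1),
        ((-1:ℝ)^(k-i) * (2*π)^(2*k-2*i) / (Nat.factorial (2*k+1-2*i))) / x^(2*i+1) := by
  rw [Finset.mul_sum]
  refine Finset.sum_congr rfl fun i hi => ?_
  have hik : i ≤ k := by
    have := Finset.mem_range.mp hi; omega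
  have hsign : (-1:ℝ)^k * (-1:ℝ)^i = (-1:ℝ)^(k-i) := by
    have e : k + i = (k-i) + 2*i := by omega
    rw [← pow_add, e, pow_add, pow_mul, neg_one_sq, one_pow, mul_one]
  have hpow : (2*π:ℝ)^(2*k+1) = (2*π)^(2*k-2*i) * (2*π)^(2*i+1) := by
    rw [← pow_add]; congr 1; omega
  have hmp : (2*π*x:ℝ)^(2*i+1) = (2*π)^(2*i+1) * x^(2*i+1) := by
    rw [← mul_pow]
  have hππ : (2*π:ℝ) ≠ 0 := by positivity
  have hf1 : (Nat.factorial (2*k+1) : ℝ) ≠ 0 := by positivity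
  have hf2 : (Nat.factorial (2*k+1-2*i) : ℝ) ≠ 0 := by positivity
  rw [hmp, hpow]
  field_simp
  rw [← hsign]

lemma boundary (k : ℕ) (x : ℝ) (hx : x ≠ 0) :
    (1/(2*x^(2*k+1))) * ∑ j ∈ Finset.range (k+1),
        (-1:ℝ)^j * (2*π*x)^(2*j) / (Nat.factorial (2*j+1))
    = (1/2) * ∑ i ∈ Finset.range (k+1),
        ((-1:ℝ)^(k-i) * (2*π)^(2*k-2*i) / (Nat.factorial (2*k+1-2*i))) / x^(2*i+1) := by
  rw [← Finset.sum_range_reflect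
    (fun i => ((-1:ℝ)^(k-i) * (2*π)^(2*k-2*i) / (Nat.factorial (2*k+1-2*i))) / x^(2*i+1)) (k+1)]
  rw [Finset.mul_sum, Finset.mul_sum]
  refine Finset.sum_congr rfl fun j hj => ?_
  have hjk : j ≤ k := by have := Finset.mem_range.mp hj; omega
  have e1 : k - (k + 1 - 1 - j) = j := by omega
  have e2 : 2*k - 2*(k + 1 - 1 - j) = 2*j := by omega
  have e3 : 2*k+1 - 2*(k + 1 - 1 - j) = 2*j+1 := by omega
  have e4 : 2*(k + 1 - 1 - j)+1 = 2*k+1 - 2*j := by omega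
  simp only [e1, e2, e3, e4]
  have hxp : x^(2*k+1) = x^(2*j) * x^(2*k+1-2*j) := by rw [← pow_add]; congr 1; omega
  have hmp : (2*π*x:ℝ)^(2*j) = (2*π)^(2*j) * x^(2*j) := by rw [← mul_pow]
  have hf : (Nat.factorial (2*j+1) : ℝ) ≠ 0 := by positivity
  rw [hmp, hxp]
  field_simp

end Aux

theorem stmt_8 (a b : ℤ) (ha : a ≠ 0) (hb : b ≠ 0) (n : ℕ) (hn : 0 < n)
    (h : ∀ j : ℤ, 1 ≤ j → j ≤ n → a * j + b ≠ 0) (k : ℕ) :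
    ∑ j ∈ Finset.Icc 1 n, (1 : ℝ) / (a * j + b) ^ (2 * k + 1) =
      -(1 / (2 * (b : ℝ) ^ (2 * k + 1))) *
          ∑ j ∈ Finset.range (k + 1),
            (-1 : ℝ) ^ j * (2 * π * b) ^ (2 * j) / (Nat.factorial (2 * j + 1))
      + (1 / (2 * ((a : ℝ) * n + b) ^ (2 * k + 1))) *
          ∑ j ∈ Finset.range (k + 1),
            (-1 : ℝ) ^ j * (2 * π * ((a : ℝ) * n + b)) ^ (2 * j) /
              (Nat.factorial (2 * j + 1))
      - (∑ j ∈ Finset.range k,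
          ((-1 : ℝ) ^ (k - j) * (2 * π) ^ (2 * k - 2 * j) /
              (Nat.factorial (2 * k + 1 - 2 * j))) *
            ∑ i ∈ Finset.Icc 1 n, (1 : ℝ) / (a * i + b) ^ (2 * j + 1))
      + ((-1 : ℝ) ^ k * (2 * π) ^ (2 * k + 1) / (Nat.factorial (2 * k + 1))) *
          ∫ u in (0:ℝ)..1,
            (1 - u) ^ (2 * k + 1) * Real.sin (π * (a * n + 2 * b) * u) *
              Real.sin (π * a * n * u) * Real.cot (π * a * u) := by
  -- nonzero facts
  have hm : ∀ j : ℕ, j ≤ n → ((a:ℝ)*j + b) ≠ 0 := by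
    intro j hj
    rcases Nat.eq_zero_or_pos j with h0 | h1
    · subst h0
      simpa using (Int.cast_ne_zero.mpr hb : (b:ℝ) ≠ 0)
    · intro hc
      refine h j (by exact_mod_cast h1) (by exact_mod_cast hj) ?_
      have : ((a*(j:ℤ)+b : ℤ):ℝ) = 0 := by push_cast; linarith [hc]
      exact_mod_cast this
  set fI : ℝ → ℝ := fun x => ∑ i ∈ Finset.range (k+1),
      (-1:ℝ)^i * ((Nat.factorial (2*k+1):ℝ)/(Nat.factorial (2*k+1-2*i))) / (2*π*x)^(2*i+1)
    with hfI
  have hF : ∀ x : ℝ, x ≠ 0 → (∃ m : ℤ, (m:ℝ) = x) →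
      (∫ u in (0:ℝ)..1, (1-u)^(2*k+1) * Real.sin ((2*π*x)*u)) = fI x := by
    rintro x hx ⟨m, rfl⟩
    apply Fclosed
    · exact mul_ne_zero (by positivity) hx
    · rw [show (2*π*(m:ℝ)) = ((2*m : ℤ):ℝ)*π by push_cast; ring]
      exact Real.sin_int_mul_pi _
  rw [integral_eq a b ha n k]
  set g : ℕ → ℝ := fun j => fI ((a:ℝ)*j+b) with hg
  have key : ∀ j ∈ Finset.range n,
      (1/2) * (∫ u in (0:ℝ)..1, (1-u)^(2*k+1) * Real.sin ((2*π*((a:ℝ)*(j+1)+b))*u))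
        + (1/2) * (∫ u in (0:ℝ)..1, (1-u)^(2*k+1) * Real.sin ((2*π*((a:ℝ)*j+b))*u))
      = (1/2) * g (j+1) + (1/2) * g j := by
    intro j hj
    have hjn := Finset.mem_range.mp hj
    have e1 : ((a:ℝ)*(j+1)+b) = ((a:ℝ)*((j+1:ℕ):ℝ)+b) := by push_cast; ring
    rw [e1, hF _ (hm (j+1) (by omega)) ⟨a*(j+1)+b, by push_cast; ring⟩,
      hF _ (hm j (by omega)) ⟨a*j+b, by push_cast; ring⟩]
  rw [Finset.sum_congr rfl key, Finset.sum_add_distrib, ← Finset.mul_sum, ← Finset.mul_sum]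
  -- telescoping
  have tele : ∑ j ∈ Finset.range n, g j
      = (∑ j ∈ Finset.range n, g (j+1)) + g 0 - g n := by
    have t1 := Finset.sum_range_succ' g n
    have t2 := Finset.sum_range_succ g n
    rw [t2] at t1
    linarith
  set cc : ℕ → ℝ := fun i =>
    (-1:ℝ)^(k-i) * (2*π)^(2*k-2*i) / (Nat.factorial (2*k+1-2*i)) with hcc
  set C : ℝ := (-1:ℝ)^k * (2*π)^(2*k+1) / (Nat.factorial (2*k+1)) with hC
  have hCS : ∀ x : ℝ, x ≠ 0 → C * fI x = ∑ i ∈ Finset.range (k+1), cc i / x^(2*i+1) :=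
    fun x hx => CS k x hx
  have hIcc : ∀ r : ℕ, ∑ j ∈ Finset.Icc 1 n, (1:ℝ)/((a:ℝ)*j+b)^r
      = ∑ j ∈ Finset.range n, (1:ℝ)/((a:ℝ)*((j+1:ℕ):ℝ)+b)^r := by
    intro r
    rw [← Finset.Ico_add_one_right_eq_Icc, Finset.sum_Ico_eq_sum_range,
      show n + 1 - 1 = n from rfl]
    exact Finset.sum_congr rfl fun j _ => by rw [add_comm 1 j]
  -- C times the shifted sum
  have hmain : C * (∑ j ∈ Finset.range n, g (j+1))
      = (∑ j ∈ Finset.Icc 1 n, (1:ℝ)/((a:ℝ)*j+b)^(2*k+1))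
        + ∑ i ∈ Finset.range k, cc i * ∑ j ∈ Finset.Icc 1 n, (1:ℝ)/((a:ℝ)*j+b)^(2*i+1) := by
    have step1 : C * (∑ j ∈ Finset.range n, g (j+1))
        = ∑ j ∈ Finset.range n, ∑ i ∈ Finset.range (k+1), cc i / ((a:ℝ)*((j+1:ℕ):ℝ)+b)^(2*i+1) := by
      rw [Finset.mul_sum]
      refine Finset.sum_congr rfl fun j hj => ?_
      have hjn := Finset.mem_range.mp hj
      exact hCS ((a:ℝ)*((j+1:ℕ):ℝ)+b) (hm (j+1) (by omega))
    rw [step1, Finset.sum_comm]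
    have step2 : ∀ i ∈ Finset.range (k+1),
        ∑ j ∈ Finset.range n, cc i / ((a:ℝ)*((j+1:ℕ):ℝ)+b)^(2*i+1)
        = cc i * ∑ j ∈ Finset.Icc 1 n, (1:ℝ)/((a:ℝ)*j+b)^(2*i+1) := by
      intro i _
      rw [hIcc (2*i+1), Finset.mul_sum]
      exact Finset.sum_congr rfl fun j _ => by rw [mul_one_div]
    rw [Finset.sum_congr rfl step2, Finset.sum_range_succ]
    have hck : cc k = 1 := by
      rw [hcc]
      simp only [Nat.sub_self, pow_zero, show 2*k-2*k = 0 by omega, show 2*k+1-2*k = 1 by omega]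
      simp [Nat.factorial]
    rw [hck, one_mul]
    ring
  -- boundary values
  have hg0 : C * g 0 = ∑ i ∈ Finset.range (k+1), cc i / (b:ℝ)^(2*i+1) := by
    have e0 : ((a:ℝ)*((0:ℕ):ℝ)+b) = (b:ℝ) := by push_cast; ring
    show C * fI ((a:ℝ)*((0:ℕ):ℝ)+b) = _
    rw [e0]
    exact hCS _ (Int.cast_ne_zero.mpr hb)
  have hgn : C * g n = ∑ i ∈ Finset.range (k+1), cc i / ((a:ℝ)*n+b)^(2*i+1) := by
    exact hCS _ (hm n le_rfl)
  have hb0 : (1/(2*(b:ℝ)^(2*k+1))) * ∑ j ∈ Finset.range (k+1),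
        (-1:ℝ)^j * (2*π*(b:ℝ))^(2*j) / (Nat.factorial (2*j+1))
      = (1/2) * ∑ i ∈ Finset.range (k+1), cc i / (b:ℝ)^(2*i+1) :=
    boundary k (b:ℝ) (Int.cast_ne_zero.mpr hb)
  have hbn : (1/(2*((a:ℝ)*n+b)^(2*k+1))) * ∑ j ∈ Finset.range (k+1),
        (-1:ℝ)^j * (2*π*((a:ℝ)*n+b))^(2*j) / (Nat.factorial (2*j+1))
      = (1/2) * ∑ i ∈ Finset.range (k+1), cc i / ((a:ℝ)*n+b)^(2*i+1) :=
    boundary k ((a:ℝ)*n+b) (hm n le_rfl)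
  -- final assembly
  have teleC : C * ∑ j ∈ Finset.range n, g j
      = C * (∑ j ∈ Finset.range n, g (j+1)) + C * g 0 - C * g n := by
    rw [tele]; ring
  linarith [hmain, hg0, hgn, hb0, hbn, teleC]
end

section
/- Let a and b be nonzero integers, n a positive integer such that aj + b ≠ 0 for every integer j with 1 ≤ j ≤ n, and k a nonnegative integer. Then ∑_{j=1}^{n} 1/(aj+b)^{2k+1} = -1/(2b^{2k+1}) + 1/(2(an+b)^{2k+1}) + (-1)^{k}(2π)^{2k+1} ∫_{0}^{1} [ ∑_{j=0}^{k} B_{2j}(2-2^{2j})(1-u)^{2k+1-2j}/((2j)!(2k+1-2j)!) ]·sin(π(an+2b)u)·sin(πanu)·cot(πau) du. -/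
open PowerSeries Finset

namespace Stmt9A

noncomputable def G : ℚ⟦X⟧ := 2 * bernoulliPowerSeries ℚ - rescale 2 (bernoulliPowerSeries ℚ)

lemma two_eq_C : (2 : ℚ⟦X⟧) = C 2 := (map_ofNat (C (R := ℚ)) 2).symm

lemma coeff_G (p : ℕ) : (coeff p) G = (2 - 2^p) * bernoulli p / p.factorial := by
  simp [G, two_eq_C, bernoulliPowerSeries, coeff_rescale, coeff_mk, coeff_C_mul]
  ring

lemma coeff_G_odd (p : ℕ) (hp : Odd p) : (coeff p) G = 0 := by
  rcases eq_or_ne p 1 with rfl | h1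
  · simp [coeff_G]
  · have : bernoulli p = 0 := by
      rw [bernoulli_eq_bernoulli'_of_ne_one h1]
      exact bernoulli'_eq_zero_of_odd hp (by rcases hp with ⟨m, rfl⟩; omega)
    simp [coeff_G, this]

lemma G_mul : G * (exp ℚ - evalNegHom (exp ℚ)) = 2 * X := by
  have hE2 : exp ℚ * exp ℚ = rescale (2:ℚ) (exp ℚ) := by
    have := exp_pow_eq_rescale_exp (A := ℚ) 2
    simpa [pow_two] using this
  have hB := bernoulliPowerSeries_mul_exp_sub_one ℚ
  have h2 : rescale (2:ℚ) (bernoulliPowerSeries ℚ) * (rescale 2 (exp ℚ) - 1) = 2 * X := by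
    have := congrArg (rescale (2:ℚ)) hB
    rw [map_mul, map_sub, map_one, rescale_X] at this
    rw [this, two_eq_C]
  have key : G * (exp ℚ * exp ℚ - 1) = 2 * X * exp ℚ := by
    have expand : G * (exp ℚ * exp ℚ - 1)
        = 2 * (bernoulliPowerSeries ℚ * (exp ℚ - 1)) * (exp ℚ + 1)
          - rescale (2:ℚ) (bernoulliPowerSeries ℚ) * (rescale 2 (exp ℚ) - 1) := by
      rw [← hE2]; simp only [G]; ring
    rw [expand, hB, h2]
    ring
  have hunit : IsUnit (exp ℚ) :=
    IsUnit.of_mul_eq_one _ (exp_mul_exp_neg_eq_one (A := ℚ))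
  refine hunit.mul_right_cancel ?_
  rw [key.symm]
  have : G * (exp ℚ - evalNegHom (exp ℚ)) * exp ℚ
      = G * (exp ℚ * exp ℚ - 1) - G * (evalNegHom (exp ℚ) * exp ℚ - 1) := by ring
  rw [this, mul_comm (evalNegHom (exp ℚ)) (exp ℚ), exp_mul_exp_neg_eq_one (A := ℚ)]
  simp

end Stmt9A

namespace Stmt9A

lemma coeff_S (q : ℕ) :
    (coeff q) (exp ℚ - evalNegHom (exp ℚ)) = (1 - (-1:ℚ)^q) / q.factorial := by
  rw [map_sub, coeff_exp]
  have : (coeff q) (evalNegHom (exp ℚ)) = (-1:ℚ)^q / q.factorial := by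
    show (coeff q) (rescale (-1:ℚ) (exp ℚ)) = _
    rw [coeff_rescale, coeff_exp]
    simp [div_eq_mul_inv]
  rw [this]
  simp [sub_div]

lemma key_q (t : ℕ) :
    ∑ j ∈ range (t+1),
      (bernoulli (2*j) : ℚ) * (2 - 2^(2*j)) / ((2*j).factorial * (2*t+1-2*j).factorial)
      = if t = 0 then 1 else 0 := by
  have h := congrArg (coeff (2*t+1)) G_mul
  rw [coeff_mul, Finset.Nat.sum_antidiagonal_eq_sum_range_succ_mk] at h
  have hX : (coeff (R := ℚ) (2*t+1)) (2 * X) = if t = 0 then 2 else 0 := by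
    rw [two_eq_C, coeff_C_mul, coeff_X]
    rcases eq_or_ne t 0 with rfl | ht
    · simp
    · have h1 : ¬ (2*t+1 = 1) := by omega
      simp [ht, h1]
  rw [hX] at h
  have hsplit : ∑ i ∈ range (2*t+1+1),
      (coeff i) G * (coeff (2*t+1-i)) (exp ℚ - evalNegHom (exp ℚ))
      = ∑ j ∈ range (t+1),
        (coeff (2*j)) G * (coeff (2*t+1-2*j)) (exp ℚ - evalNegHom (exp ℚ)) := by
    rw [← Finset.sum_filter_add_sum_filter_not (range (2*t+1+1)) (fun i => Even i)]
    have hodd : ∑ i ∈ (range (2*t+1+1)).filter (fun i => ¬ Even i),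
        (coeff i) G * (coeff (2*t+1-i)) (exp ℚ - evalNegHom (exp ℚ)) = 0 := by
      apply Finset.sum_eq_zero
      intro i hi
      simp only [Finset.mem_filter, Nat.not_even_iff_odd] at hi
      rw [coeff_G_odd i hi.2, zero_mul]
    rw [hodd, add_zero]
    refine Finset.sum_nbij' (fun i => i / 2) (fun j => 2 * j) ?_ ?_ ?_ ?_ ?_
    · intro i hi
      simp only [Finset.mem_filter, Finset.mem_range] at hi ⊢
      omega
    · intro j hj
      simp only [Finset.mem_filter, Finset.mem_range] at hj ⊢
      constructor
      · omega
      · exact even_two_mul j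
    · intro i hi
      simp only [Finset.mem_filter, Finset.mem_range] at hi
      obtain ⟨-, m, hm⟩ := hi
      omega
    · intro j hj
      omega
    · intro i hi
      simp only [Finset.mem_filter, Finset.mem_range] at hi
      obtain ⟨-, m, hm⟩ := hi
      rw [show 2 * (i / 2) = i from by omega]
  rw [hsplit] at h
  have hterm : ∀ j ∈ range (t+1),
      (coeff (2*j)) G * (coeff (2*t+1-2*j)) (exp ℚ - evalNegHom (exp ℚ))
      = 2 * ((bernoulli (2*j) : ℚ) * (2 - 2^(2*j)) / ((2*j).factorial * (2*t+1-2*j).factorial)) := by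
    intro j hj
    rw [coeff_G, coeff_S]
    have : (-1:ℚ)^(2*t+1-2*j) = -1 := by
      have : Odd (2*t+1-2*j) := by
        simp only [Finset.mem_range] at hj
        refine ⟨t - j, by omega⟩
      exact Odd.neg_one_pow this
    rw [this]
    have h1 : ((2*j).factorial : ℚ) ≠ 0 := by positivity
    have h2 : ((2*t+1-2*j).factorial : ℚ) ≠ 0 := by positivity
    field_simp
    ring
  rw [Finset.sum_congr rfl hterm, ← Finset.mul_sum] at h
  rcases eq_or_ne t 0 with rfl | ht
  · norm_num at h ⊢
    try linarith
  · simp only [if_neg ht] at h ⊢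
    linarith

end Stmt9A

open Real Finset intervalIntegral

namespace Stmt9B

lemma aux_div (B F1 F2 pp x : ℝ) (h1 : F1 ≠ 0) (h2 : F2 ≠ 0) (hp : pp ≠ 0) :
    B * (-(pp * x)) / (F1 * (pp * F2)) = -(B * x / (F1 * F2)) := by
  field_simp

noncomputable def P (k : ℕ) (u : ℝ) : ℝ :=
  ∑ j ∈ range (k+1), (bernoulli (2*j) : ℝ) * (2 - 2^(2*j)) * (1-u)^(2*k+1-2*j)
      / ((2*j).factorial * (2*k+1-2*j).factorial)

noncomputable def P' (k : ℕ) (u : ℝ) : ℝ :=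
  ∑ j ∈ range (k+1), -((bernoulli (2*j) : ℝ) * (2 - 2^(2*j)) * (1-u)^(2*k-2*j)
      / ((2*j).factorial * (2*k-2*j).factorial))

lemma P_continuous (k : ℕ) : Continuous (P k) := by
  unfold P; fun_prop

lemma P'_continuous (k : ℕ) : Continuous (P' k) := by
  unfold P'; fun_prop

lemma cast_factorial_succ_eq (p m : ℕ) (h : p = m + 1) :
    (p.factorial : ℝ) = (p : ℝ) * m.factorial := by
  subst h
  rw [Nat.factorial_succ]
  push_cast
  ring

lemma hasDerivAt_P (k : ℕ) (u : ℝ) : HasDerivAt (P k) (P' k u) u := by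
  unfold P P'
  apply HasDerivAt.fun_sum
  intro j hj
  simp only [mem_range] at hj
  have h1 : HasDerivAt (fun u : ℝ => 1 - u) (-1) u := by
    simpa using (hasDerivAt_const u (1:ℝ)).fun_sub (hasDerivAt_id u)
  have hbase : HasDerivAt (fun u : ℝ => (1-u)^(2*k+1-2*j))
      (-((2*k+1-2*j : ℕ) * (1-u)^(2*k-2*j))) u := by
    have := h1.fun_pow (2*k+1-2*j)
    rw [show 2*k+1-2*j-1 = 2*k-2*j from by omega] at this
    refine this.congr_deriv (Eq.symm ?_)
    ring
  have := (hbase.const_mul ((bernoulli (2*j) : ℝ) * (2 - 2^(2*j)))).div_const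
      ((2*j).factorial * (2*k+1-2*j).factorial)
  refine this.congr_deriv (Eq.symm ?_)
  rw [cast_factorial_succ_eq (2*k+1-2*j) (2*k-2*j) (by omega)]
  rw [eq_comm]
  apply aux_div
  · positivity
  · positivity
  · have : (2*k+1-2*j : ℕ) ≠ 0 := by omega
    exact Nat.cast_ne_zero.mpr this

lemma hasDerivAt_P' (k : ℕ) (u : ℝ) (hk : 0 < k) : HasDerivAt (P' k) (P (k-1) u) u := by
  unfold P' P
  rw [show k - 1 + 1 = k from by omega]
  have key : HasDerivAt (fun u => ∑ j ∈ range (k+1), -((bernoulli (2*j) : ℝ) * (2 - 2^(2*j)) * (1-u)^(2*k-2*j)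
      / ((2*j).factorial * (2*k-2*j).factorial)))
      (∑ j ∈ range (k+1), ((bernoulli (2*j) : ℝ) * (2 - 2^(2*j)) * (((2*k-2*j):ℕ) * (1-u)^(2*k-2*j-1))
      / ((2*j).factorial * (2*k-2*j).factorial))) u := by
    apply HasDerivAt.fun_sum
    intro j hj
    have h1 : HasDerivAt (fun u : ℝ => 1 - u) (-1) u := by
      simpa using (hasDerivAt_const u (1:ℝ)).fun_sub (hasDerivAt_id u)
    have hbase := h1.fun_pow (2*k-2*j)
    have := ((hbase.const_mul ((bernoulli (2*j) : ℝ) * (2 - 2^(2*j)))).div_const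
      ((2*j).factorial * (2*k-2*j).factorial)).fun_neg
    refine this.congr_deriv (Eq.symm ?_)
    ring
  convert key using 1
  rw [eq_comm, Finset.sum_range_succ]
  have hlast : ((bernoulli (2*k) : ℝ) * (2 - 2^(2*k)) * (((2*k-2*k):ℕ) * (1-u)^(2*k-2*k-1))
      / ((2*k).factorial * (2*k-2*k).factorial)) = 0 := by
    simp
  rw [hlast, add_zero]
  apply Finset.sum_congr rfl
  intro j hj
  simp only [mem_range] at hj
  rw [show 2*(k-1)+1-2*j = 2*k-2*j-1 from by omega]
  rw [cast_factorial_succ_eq (2*k-2*j) (2*k-2*j-1) (by omega)]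
  have h1 : ((2*j).factorial : ℝ) ≠ 0 := by positivity
  have h2 : ((2*k-2*j-1).factorial : ℝ) ≠ 0 := by positivity
  have h5 : ((2*k-2*j : ℕ) : ℝ) ≠ 0 := by
    have : (2*k-2*j : ℕ) ≠ 0 := by omega
    exact Nat.cast_ne_zero.mpr this
  rw [eq_comm]
  have := aux_div ((bernoulli (2*j) : ℝ) * (2 - 2^(2*j))) ((2*j).factorial)
      ((2*k-2*j-1).factorial) ((2*k-2*j : ℕ) : ℝ) (-((1-u)^(2*k-2*j-1))) h1 h2 h5
  rw [show ((bernoulli (2*j) : ℝ) * (2 - 2^(2*j))) * (-(((2*k-2*j:ℕ):ℝ) * (-((1-u)^(2*k-2*j-1)))))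
      = ((bernoulli (2*j) : ℝ) * (2 - 2^(2*j))) * (((2*k-2*j:ℕ):ℝ) * ((1-u)^(2*k-2*j-1))) from by ring] at this
  rw [this]
  ring

end Stmt9B

open Real Finset intervalIntegral MeasureTheory

namespace Stmt9C

-- integration by parts specialized
lemma ibp_sin (f f' : ℝ → ℝ) (hf : ∀ x, HasDerivAt f (f' x) x) (hf' : Continuous f')
    (θ : ℝ) (hθ : θ ≠ 0) :
    ∫ x in (0:ℝ)..1, f x * Real.sin (θ*x)
      = (f 0 - f 1 * Real.cos θ)/θ + (1/θ) * ∫ x in (0:ℝ)..1, f' x * Real.cos (θ*x) := by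
  have hv : ∀ x ∈ Set.uIcc (0:ℝ) 1, HasDerivAt (fun x => -Real.cos (θ*x)/θ) (Real.sin (θ*x)) x := by
    intro x _
    have h1 : HasDerivAt (fun x : ℝ => θ*x) θ x := by
      simpa using (hasDerivAt_id x).const_mul θ
    have h2 := (h1.cos).neg.div_const θ
    refine h2.congr_deriv (Eq.symm ?_)
    field_simp
  have hu : ∀ x ∈ Set.uIcc (0:ℝ) 1, HasDerivAt f (f' x) x := fun x _ => hf x
  have hint1 : IntervalIntegrable f' volume 0 1 := hf'.intervalIntegrable 0 1
  have hint2 : IntervalIntegrable (fun x => Real.sin (θ*x)) volume 0 1 := by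
    apply Continuous.intervalIntegrable; fun_prop
  have := intervalIntegral.integral_mul_deriv_eq_deriv_mul hu hv hint1 hint2
  rw [this]
  have : ∫ x in (0:ℝ)..1, f' x * (-Real.cos (θ*x)/θ)
      = -(1/θ) * ∫ x in (0:ℝ)..1, f' x * Real.cos (θ*x) := by
    rw [← intervalIntegral.integral_const_mul]
    apply intervalIntegral.integral_congr
    intro x _
    field_simp
    try ring
  rw [this]
  simp only [mul_zero, Real.cos_zero, mul_one]
  field_simp
  try ring

lemma ibp_cos (f f' : ℝ → ℝ) (hf : ∀ x, HasDerivAt f (f' x) x) (hf' : Continuous f')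
    (θ : ℝ) (hθ : θ ≠ 0) :
    ∫ x in (0:ℝ)..1, f x * Real.cos (θ*x)
      = (f 1 * Real.sin θ)/θ - (1/θ) * ∫ x in (0:ℝ)..1, f' x * Real.sin (θ*x) := by
  have hv : ∀ x ∈ Set.uIcc (0:ℝ) 1, HasDerivAt (fun x => Real.sin (θ*x)/θ) (Real.cos (θ*x)) x := by
    intro x _
    have h1 : HasDerivAt (fun x : ℝ => θ*x) θ x := by
      simpa using (hasDerivAt_id x).const_mul θ
    have h2 := (h1.sin).div_const θ
    refine h2.congr_deriv (Eq.symm ?_)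
    field_simp
  have hu : ∀ x ∈ Set.uIcc (0:ℝ) 1, HasDerivAt f (f' x) x := fun x _ => hf x
  have hint1 : IntervalIntegrable f' volume 0 1 := hf'.intervalIntegrable 0 1
  have hint2 : IntervalIntegrable (fun x => Real.cos (θ*x)) volume 0 1 := by
    apply Continuous.intervalIntegrable; fun_prop
  have := intervalIntegral.integral_mul_deriv_eq_deriv_mul hu hv hint1 hint2
  rw [this]
  have : ∫ x in (0:ℝ)..1, f' x * (Real.sin (θ*x)/θ)
      = (1/θ) * ∫ x in (0:ℝ)..1, f' x * Real.sin (θ*x) := by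
    rw [← intervalIntegral.integral_const_mul]
    apply intervalIntegral.integral_congr
    intro x _
    field_simp
    try ring
  rw [this]
  simp only [mul_zero, Real.sin_zero, zero_div, mul_one]
  field_simp
  try ring

end Stmt9C

open Real Finset

namespace Stmt9D

lemma sin_mul_sin (A B : ℝ) : Real.sin A * Real.sin B = (Real.cos (A-B) - Real.cos (A+B))/2 := by
  rw [Real.cos_sub, Real.cos_add]
  ring

lemma trig_step (w p : ℝ) :
    Real.cos p * (Real.cos w - Real.cos (w + 2*p)) = Real.sin p * (Real.sin (w + 2*p) + Real.sin w) := by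
  rw [Real.cos_add, Real.sin_add, Real.cos_two_mul, Real.sin_two_mul]
  linear_combination (-(2:ℝ) * Real.cos p * Real.cos w) * (Real.sin_sq_add_cos_sq p)

lemma trig_delta (y p q : ℝ) :
    Real.sin (y+p+2*q) * Real.sin (y+p) * Real.cos p - Real.sin (y+2*q) * Real.sin y * Real.cos p
    = (Real.sin (2*(y+p+q))/2 + Real.sin (2*(y+q))/2) * Real.sin p := by
  have e1 := sin_mul_sin (y+p+2*q) (y+p)
  rw [show (y+p+2*q)-(y+p) = 2*q from by ring, show (y+p+2*q)+(y+p) = 2*y+2*q+2*p from by ring] at e1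
  have e2 := sin_mul_sin (y+2*q) y
  rw [show (y+2*q)-y = 2*q from by ring, show (y+2*q)+y = 2*y+2*q from by ring] at e2
  have e3 := trig_step (2*y+2*q) p
  rw [show 2*(y+p+q) = 2*y+2*q+2*p from by ring, show 2*(y+q) = 2*y+2*q from by ring]
  linear_combination (Real.cos p) * e1 - (Real.cos p) * e2 + e3/2

lemma trig_sum (p q : ℝ) (n : ℕ) :
    Real.sin (n*p + 2*q) * Real.sin (n*p) * Real.cos p
    = (∑ j ∈ Icc 1 n, Real.sin (2*((j:ℝ)*p+q)) + Real.sin (2*q)/2 - Real.sin (2*((n:ℝ)*p+q))/2)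
        * Real.sin p := by
  induction n with
  | zero => simp
  | succ n ih =>
    rw [Finset.sum_Icc_succ_top (by omega : 1 ≤ n+1)]
    push_cast
    have hd := trig_delta ((n:ℝ)*p) p q
    rw [show (n:ℝ)*p+p+2*q = ((n:ℝ)+1)*p+2*q from by ring,
        show (n:ℝ)*p+p = ((n:ℝ)+1)*p from by ring] at hd
    have goal_eq : Real.sin (((n:ℝ)+1)*p + 2*q) * Real.sin (((n:ℝ)+1)*p) * Real.cos p
        = Real.sin ((n:ℝ)*p + 2*q) * Real.sin ((n:ℝ)*p) * Real.cos p
          + (Real.sin (2*(((n:ℝ)+1)*p+q))/2 + Real.sin (2*((n:ℝ)*p+q))/2) * Real.sin p := by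
      linear_combination hd
    rw [goal_eq, ih]
    ring

end Stmt9D

open Real Finset intervalIntegral MeasureTheory

namespace Stmt9E

lemma sin_two_pi_int (m : ℤ) : Real.sin (2*π*(m:ℝ)) = 0 := by
  rw [show 2*π*(m:ℝ) = ((2*m : ℤ):ℝ)*π from by push_cast; ring]
  exact Real.sin_int_mul_pi (2*m)

lemma cos_two_pi_int (m : ℤ) : Real.cos (2*π*(m:ℝ)) = 1 := by
  rw [show 2*π*(m:ℝ) = (m:ℝ)*(2*π) from by ring]
  exact Real.cos_int_mul_two_pi m

end Stmt9E

namespace Stmt9B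
open Stmt9A Stmt9C

lemma P_one (k : ℕ) : P k 1 = 0 := by
  unfold P
  apply Finset.sum_eq_zero
  intro j hj
  simp only [mem_range] at hj
  rw [sub_self, zero_pow (by omega : 2*k+1-2*j ≠ 0)]
  simp

lemma P_zero (k : ℕ) : P k 0 = if k = 0 then 1 else 0 := by
  have h := key_q k
  have h' := congrArg (fun q : ℚ => (q : ℝ)) h
  push_cast at h'
  unfold P
  rw [show ((if k = 0 then (1:ℚ) else 0 : ℚ) : ℝ) = (if k = 0 then (1:ℝ) else 0) from by
    split_ifs <;> norm_num] at h'
  rw [← h']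
  apply Finset.sum_congr rfl
  intro j hj
  norm_num

lemma integral_P_sin (k : ℕ) (θ : ℝ) (hθ : θ ≠ 0) (hs : Real.sin θ = 0) (hc : Real.cos θ = 1) :
    ∫ u in (0:ℝ)..1, P k u * Real.sin (θ*u) = (-1:ℝ)^k / θ^(2*k+1) := by
  induction k with
  | zero =>
    have hP'const : P' 0 = fun _ : ℝ => (-1 : ℝ) := by
      funext u
      unfold P'
      norm_num
    rw [ibp_sin (P 0) (P' 0) (hasDerivAt_P 0) (P'_continuous 0) θ hθ]
    rw [ibp_cos (P' 0) (fun _ => 0) (by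
        intro x
        rw [hP'const]
        exact hasDerivAt_const x (-1)) continuous_const θ hθ]
    simp only [P_one, P_zero, hc, hs]
    norm_num
  | succ k ih =>
    rw [ibp_sin (P (k+1)) (P' (k+1)) (hasDerivAt_P (k+1)) (P'_continuous (k+1)) θ hθ]
    have hd : ∀ x, HasDerivAt (P' (k+1)) (P k x) x := by
      intro x
      have := hasDerivAt_P' (k+1) x (by omega)
      simpa using this
    rw [ibp_cos (P' (k+1)) (P k) hd (P_continuous k) θ hθ]
    rw [ih]
    simp only [P_one, P_zero, hc, hs]
    have hne : (k+1 : ℕ) ≠ 0 := by omega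
    rw [if_neg hne]
    have hpow : θ^(2*(k+1)+1) = θ^(2*k+1) * θ^2 := by
      rw [← pow_add]
      ring_nf
    rw [hpow]
    have h1 : θ^(2*k+1) ≠ 0 := pow_ne_zero _ hθ
    field_simp
    ring
end Stmt9B


namespace Stmt9F
open Stmt9A Stmt9B Stmt9C Stmt9D Stmt9E


lemma int_term (k : ℕ) (m : ℤ) (hm : m ≠ 0) :
    ∫ u in (0:ℝ)..1, P k u * Real.sin ((2*π*(m:ℝ))*u)
      = (-1:ℝ)^k / (2*π*(m:ℝ))^(2*k+1) := by
  apply integral_P_sin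
  · have h1 : ((m:ℝ)) ≠ 0 := Int.cast_ne_zero.mpr hm
    have h2 : (0:ℝ) < π := Real.pi_pos
    positivity
  · exact sin_two_pi_int m
  · exact cos_two_pi_int m

lemma integral_g (a b : ℤ) (n k : ℕ)
    (hjb : ∀ j ∈ Icc 1 n, a * (j:ℤ) + b ≠ 0) (hb : b ≠ 0) (hnb : a * (n:ℤ) + b ≠ 0) :
    ∫ u in (0:ℝ)..1, P k u *
        (∑ j ∈ Icc 1 n, Real.sin ((2*π*((a:ℝ)*(j:ℕ)+(b:ℝ)))*u)
          + Real.sin ((2*π*(b:ℝ))*u)/2 - Real.sin ((2*π*((a:ℝ)*(n:ℕ)+(b:ℝ)))*u)/2)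
      = ∑ j ∈ Icc 1 n, (-1:ℝ)^k/(2*π*((a:ℝ)*(j:ℕ)+(b:ℝ)))^(2*k+1)
        + ((-1:ℝ)^k/(2*π*(b:ℝ))^(2*k+1))/2
        - ((-1:ℝ)^k/(2*π*((a:ℝ)*(n:ℕ)+(b:ℝ)))^(2*k+1))/2 := by
  have hfun : ∀ u : ℝ, P k u *
        (∑ j ∈ Icc 1 n, Real.sin ((2*π*((a:ℝ)*(j:ℕ)+(b:ℝ)))*u)
          + Real.sin ((2*π*(b:ℝ))*u)/2 - Real.sin ((2*π*((a:ℝ)*(n:ℕ)+(b:ℝ)))*u)/2)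
      = (∑ j ∈ Icc 1 n, P k u * Real.sin ((2*π*((a:ℝ)*(j:ℕ)+(b:ℝ)))*u))
        + (P k u * Real.sin ((2*π*(b:ℝ))*u))/2
        - (P k u * Real.sin ((2*π*((a:ℝ)*(n:ℕ)+(b:ℝ)))*u))/2 := by
    intro u
    rw [mul_sub, mul_add, Finset.mul_sum]
    ring
  have c1 : ∀ θ : ℝ, Continuous (fun u => P k u * Real.sin (θ*u)) := by
    intro θ
    exact (P_continuous k).mul (by fun_prop)
  have i1 : IntervalIntegrable
      (fun u => ∑ j ∈ Icc 1 n, P k u * Real.sin ((2*π*((a:ℝ)*(j:ℕ)+(b:ℝ)))*u)) volume 0 1 :=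
    (continuous_finset_sum _ (fun j _ => c1 _)).intervalIntegrable 0 1
  have i2 : IntervalIntegrable
      (fun u => (P k u * Real.sin ((2*π*(b:ℝ))*u))/2) volume 0 1 :=
    ((c1 _).div_const 2).intervalIntegrable 0 1
  have i3 : IntervalIntegrable
      (fun u => (P k u * Real.sin ((2*π*((a:ℝ)*(n:ℕ)+(b:ℝ)))*u))/2) volume 0 1 :=
    ((c1 _).div_const 2).intervalIntegrable 0 1
  rw [intervalIntegral.integral_congr (fun u _ => hfun u)]
  rw [intervalIntegral.integral_sub (i1.add i2) i3, intervalIntegral.integral_add i1 i2]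
  rw [intervalIntegral.integral_finset_sum (fun j _ => (c1 _).intervalIntegrable 0 1)]
  rw [intervalIntegral.integral_div, intervalIntegral.integral_div]
  have cast1 : ∀ j : ℕ, ((a:ℝ)*(j:ℕ)+(b:ℝ)) = (((a*j+b : ℤ)):ℝ) := by
    intro j; push_cast; ring
  congr 1
  · congr 1
    · apply Finset.sum_congr rfl
      intro j hj
      rw [cast1 j]
      exact int_term k (a*j+b) (hjb j hj)
    · rw [show ((b:ℝ)) = (((b:ℤ)):ℝ) from by norm_num]
      rw [int_term k b hb]
  · rw [cast1 n]
    rw [int_term k (a*n+b) hnb]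

end Stmt9F

namespace Stmt9F
open Stmt9A Stmt9B Stmt9C Stmt9D Stmt9E

lemma pointwise (a b : ℤ) (n k : ℕ) (u : ℝ) (hs : Real.sin (π*(a:ℝ)*u) ≠ 0) :
    Stmt9B.P k u * Real.sin (π*((a:ℝ)*(n:ℕ)+2*(b:ℝ))*u) * Real.sin (π*(a:ℝ)*(n:ℕ)*u)
        * Real.cot (π*(a:ℝ)*u)
      = Stmt9B.P k u *
        (∑ j ∈ Icc 1 n, Real.sin ((2*π*((a:ℝ)*(j:ℕ)+(b:ℝ)))*u)
          + Real.sin ((2*π*(b:ℝ))*u)/2 - Real.sin ((2*π*((a:ℝ)*(n:ℕ)+(b:ℝ)))*u)/2) := by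
  rw [Real.cot_eq_cos_div_sin]
  have ht := trig_sum (π*(a:ℝ)*u) (π*(b:ℝ)*u) n
  rw [show (n:ℝ)*(π*(a:ℝ)*u) + 2*(π*(b:ℝ)*u) = π*((a:ℝ)*(n:ℕ)+2*(b:ℝ))*u from by ring,
      show (n:ℝ)*(π*(a:ℝ)*u) = π*(a:ℝ)*(n:ℕ)*u from by ring] at ht
  have hsum : (∑ j ∈ Icc 1 n, Real.sin (2*((j:ℝ)*(π*(a:ℝ)*u)+π*(b:ℝ)*u)))
      = ∑ j ∈ Icc 1 n, Real.sin ((2*π*((a:ℝ)*(j:ℕ)+(b:ℝ)))*u) :=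
    Finset.sum_congr rfl (fun j _ => by
      rw [show 2*((j:ℝ)*(π*(a:ℝ)*u)+π*(b:ℝ)*u) = (2*π*((a:ℝ)*(j:ℕ)+(b:ℝ)))*u from by ring])
  rw [hsum, show 2*(π*(b:ℝ)*u) = (2*π*(b:ℝ))*u from by ring,
      show 2*(π*(a:ℝ)*(n:ℕ)*u+π*(b:ℝ)*u) = (2*π*((a:ℝ)*(n:ℕ)+(b:ℝ)))*u from by ring] at ht
  rw [show Stmt9B.P k u * Real.sin (π*((a:ℝ)*(n:ℕ)+2*(b:ℝ))*u) * Real.sin (π*(a:ℝ)*(n:ℕ)*u)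
        * (Real.cos (π*(a:ℝ)*u) / Real.sin (π*(a:ℝ)*u))
      = Stmt9B.P k u * ((Real.sin (π*((a:ℝ)*(n:ℕ)+2*(b:ℝ))*u) * Real.sin (π*(a:ℝ)*(n:ℕ)*u)
        * Real.cos (π*(a:ℝ)*u)) / Real.sin (π*(a:ℝ)*u)) from by ring]
  rw [ht, mul_div_cancel_right₀ _ hs]

end Stmt9F

open Stmt9F Stmt9B in
theorem stmt_9 (a b : ℤ) (ha : a ≠ 0) (hb : b ≠ 0) (n : ℕ) (hn : 0 < n)
    (h : ∀ j : ℤ, 1 ≤ j → j ≤ n → a * j + b ≠ 0) (k : ℕ) :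
    ∑ j ∈ Finset.Icc 1 n, (1 : ℝ) / (a * j + b) ^ (2 * k + 1) =
      -(1 / (2 * (b : ℝ) ^ (2 * k + 1))) + 1 / (2 * ((a : ℝ) * n + b) ^ (2 * k + 1))
      + (-1 : ℝ) ^ k * (2 * π) ^ (2 * k + 1) *
          ∫ u in (0:ℝ)..1,
            (∑ j ∈ Finset.range (k + 1),
                (bernoulli (2 * j) : ℝ) * (2 - 2 ^ (2 * j)) *
                  (1 - u) ^ (2 * k + 1 - 2 * j) /
                  ((Nat.factorial (2 * j)) * (Nat.factorial (2 * k + 1 - 2 * j)))) *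
              Real.sin (π * (a * n + 2 * b) * u) * Real.sin (π * a * n * u) *
              Real.cot (π * a * u) := by
  have hπ : (0:ℝ) < π := Real.pi_pos
  have ha' : (a:ℝ) ≠ 0 := Int.cast_ne_zero.mpr ha
  have hb' : (b:ℝ) ≠ 0 := Int.cast_ne_zero.mpr hb
  have hjb : ∀ j ∈ Finset.Icc 1 n, a * (j:ℤ) + b ≠ 0 := by
    intro j hj
    simp only [Finset.mem_Icc] at hj
    exact h j (by exact_mod_cast hj.1) (by exact_mod_cast hj.2)
  have hnb : a * (n:ℤ) + b ≠ 0 := hjb n (Finset.mem_Icc.mpr ⟨hn, le_refl n⟩)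
  have hZ : volume {u : ℝ | Real.sin (π*(a:ℝ)*u) = 0} = 0 := by
    apply Set.Countable.measure_zero
    have hsub : {u : ℝ | Real.sin (π*(a:ℝ)*u) = 0} ⊆ Set.range (fun m : ℤ => (m:ℝ)/(a:ℝ)) := by
      intro u hu
      simp only [Set.mem_setOf_eq] at hu
      rw [Real.sin_eq_zero_iff] at hu
      obtain ⟨m, hm⟩ := hu
      refine ⟨m, ?_⟩
      have hmm : (m:ℝ) = (a:ℝ)*u := by
        have h2 : π*(m:ℝ) = π*((a:ℝ)*u) := by linarith [hm]
        exact mul_left_cancel₀ (ne_of_gt hπ) h2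
      dsimp only
      rw [hmm]
      field_simp
    exact (Set.countable_range _).mono hsub
  have hcong : (∫ u in (0:ℝ)..1,
            (∑ j ∈ Finset.range (k + 1),
                (bernoulli (2 * j) : ℝ) * (2 - 2 ^ (2 * j)) *
                  (1 - u) ^ (2 * k + 1 - 2 * j) /
                  ((Nat.factorial (2 * j)) * (Nat.factorial (2 * k + 1 - 2 * j)))) *
              Real.sin (π * (a * n + 2 * b) * u) * Real.sin (π * a * n * u) *
              Real.cot (π * a * u))
      = ∫ u in (0:ℝ)..1, Stmt9B.P k u *
        (∑ j ∈ Finset.Icc 1 n, Real.sin ((2*π*((a:ℝ)*(j:ℕ)+(b:ℝ)))*u)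
          + Real.sin ((2*π*(b:ℝ))*u)/2 - Real.sin ((2*π*((a:ℝ)*(n:ℕ)+(b:ℝ)))*u)/2) := by
    apply intervalIntegral.integral_congr_ae
    rw [MeasureTheory.ae_iff]
    apply MeasureTheory.measure_mono_null _ hZ
    intro x hx
    simp only [Set.mem_setOf_eq] at hx ⊢
    by_contra hsx
    apply hx
    intro _
    have := pointwise a b n k x hsx
    exact this
  rw [hcong, integral_g a b n k hjb hb hnb]
  have hterm : ∀ x : ℝ, x ≠ 0 →
      (-1:ℝ)^k * (2*π)^(2*k+1) * ((-1:ℝ)^k/(2*π*x)^(2*k+1)) = 1/x^(2*k+1) := by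
    intro x hx
    have h1 : ((-1:ℝ)^k)*((-1:ℝ)^k) = 1 := by
      rw [← pow_add]
      exact Even.neg_one_pow ⟨k, rfl⟩
    have h2 : ((2:ℝ)*π)^(2*k+1) ≠ 0 := by positivity
    have h3 : x^(2*k+1) ≠ 0 := pow_ne_zero _ hx
    rw [mul_pow]
    field_simp
    linear_combination (2*π)^(2*k+1) * x^(2*k+1) * h1
  have hbne : ((a:ℝ)*(n:ℕ)+(b:ℝ)) ≠ 0 := by
    have h4 : ((a * (n:ℤ) + b : ℤ) : ℝ) ≠ 0 := Int.cast_ne_zero.mpr hnb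
    push_cast at h4
    convert h4 using 2
  set S := ∑ j ∈ Finset.Icc 1 n, (-1:ℝ)^k/(2*π*((a:ℝ)*(j:ℕ)+(b:ℝ)))^(2*k+1) with hS
  have e1 : (-1:ℝ)^k * (2*π)^(2*k+1) * S
      = ∑ j ∈ Finset.Icc 1 n, (1:ℝ)/((a:ℝ)*(j:ℕ)+(b:ℝ))^(2*k+1) := by
    rw [hS, Finset.mul_sum]
    apply Finset.sum_congr rfl
    intro j hj
    apply hterm
    have h5 : ((a * (j:ℤ) + b : ℤ) : ℝ) ≠ 0 := Int.cast_ne_zero.mpr (hjb j hj)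
    push_cast at h5
    convert h5 using 2
  have e2 := hterm _ hb'
  have e3 := hterm _ hbne
  have e2' : (-1:ℝ)^k * (2*π)^(2*k+1) * (((-1:ℝ)^k/(2*π*(b:ℝ))^(2*k+1))/2)
      = 1/(2*(b:ℝ)^(2*k+1)) := by
    rw [show (-1:ℝ)^k * (2*π)^(2*k+1) * (((-1:ℝ)^k/(2*π*(b:ℝ))^(2*k+1))/2)
        = ((-1:ℝ)^k * (2*π)^(2*k+1) * ((-1:ℝ)^k/(2*π*(b:ℝ))^(2*k+1)))/2 from by ring,
      e2, div_div, mul_comm ((b:ℝ)^(2*k+1)) 2]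
  have e3' : (-1:ℝ)^k * (2*π)^(2*k+1) * (((-1:ℝ)^k/(2*π*((a:ℝ)*(n:ℕ)+(b:ℝ)))^(2*k+1))/2)
      = 1/(2*((a:ℝ)*(n:ℕ)+(b:ℝ))^(2*k+1)) := by
    rw [show (-1:ℝ)^k * (2*π)^(2*k+1) * (((-1:ℝ)^k/(2*π*((a:ℝ)*(n:ℕ)+(b:ℝ)))^(2*k+1))/2)
        = ((-1:ℝ)^k * (2*π)^(2*k+1) * ((-1:ℝ)^k/(2*π*((a:ℝ)*(n:ℕ)+(b:ℝ)))^(2*k+1)))/2 from by ring,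
      e3, div_div, mul_comm (((a:ℝ)*(n:ℕ)+(b:ℝ))^(2*k+1)) 2]
  linear_combination -e1 - e2' + e3'
end

section
/- For every real number u and every real number x with 0 < |x| < π, the series ∑_{k=0}^{∞} (-1)^{k} [ ∑_{j=0}^{k} B_{2j}(2-2^{2j})(1-u)^{2k-2j}/((2j)!(2k-2j)!) ] x^{2k} converges and its sum equals x·cos(x(1-u))/sin(x). Equivalently, the 2k-th Taylor coefficient at 0 of f(x) = x·cos(x(1-u))/sin(x) is (-1)^{k} ∑_{j=0}^{k} B_{2j}(2-2^{2j})(1-u)^{2k-2j}/((2j)!(2k-2j)!). -/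
open PowerSeries

private lemma key_ps : ((2 : ℚ⟦X⟧) * bernoulliPowerSeries ℚ - rescale 2 (bernoulliPowerSeries ℚ)) *
    PowerSeries.mk (fun n => if Odd n then (1 / n.factorial : ℚ) else 0) = X := by
  set B := bernoulliPowerSeries ℚ with hBdef
  set E := exp ℚ with hEdef
  set S := PowerSeries.mk (fun n => if Odd n then (1 / n.factorial : ℚ) else 0) with hSdef
  have h2S : (2 : ℚ⟦X⟧) * S = E - evalNegHom E := by
    rw [two_mul]
    ext n
    simp only [map_add, map_sub, coeff_mk, hEdef, evalNegHom, coeff_rescale, coeff_exp,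
      eq_ratCast, Rat.cast_div, Rat.cast_one, Rat.cast_natCast, hSdef]
    rcases Nat.even_or_odd n with h | h
    · simp [Nat.not_odd_iff_even.2 h, h.neg_one_pow]
    · simp only [h, if_true, h.neg_one_pow]
      ring
  have hSE : ((2 : ℚ⟦X⟧) * S) * E = E * E - 1 := by
    rw [h2S]
    have h1 : E * evalNegHom E = 1 := exp_mul_exp_neg_eq_one (A := ℚ)
    linear_combination -h1
  have hEE : E * E = rescale (2:ℚ) E := by
    have := exp_pow_eq_rescale_exp (A := ℚ) 2
    rw [pow_two] at this
    simpa using this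
  have hB : B * (E - 1) = X := bernoulliPowerSeries_mul_exp_sub_one ℚ
  have hB2 : rescale (2:ℚ) B * (rescale (2:ℚ) E - 1) = 2 * X := by
    have h := congrArg (rescale (2:ℚ)) hB
    rw [map_mul, map_sub, map_one, rescale_X] at h
    rw [h, map_ofNat]
  have h1 : ((2:ℚ⟦X⟧) * B - rescale 2 B) * (E * E - 1) = 2 * X * E := by
    have e1 : (2:ℚ⟦X⟧) * B * (E * E - 1) = 2 * X * (E + 1) := by
      linear_combination (2 * (E + 1)) * hB
    have e2 : rescale (2:ℚ) B * (E * E - 1) = 2 * X := by rw [hEE]; exact hB2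
    linear_combination e1 - e2
  have hEne : (2 : ℚ⟦X⟧) * E ≠ 0 := by
    apply mul_ne_zero
    · intro h
      have := congrArg (constantCoeff) h
      rw [map_ofNat, map_zero] at this
      norm_num at this
    · intro h
      have := congrArg (constantCoeff) h
      simp [hEdef] at this
  apply mul_right_cancel₀ hEne
  calc ((2 * B - rescale 2 B) * S) * (2 * E)
      = (2 * B - rescale 2 B) * (((2:ℚ⟦X⟧) * S) * E) := by ring
    _ = (2 * B - rescale 2 B) * (E * E - 1) := by rw [hSE]
    _ = X * (2 * E) := by rw [h1]; ring

private lemma sum_range_even {M : Type*} [AddCommMonoid M] (h : ℕ → M)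
    (h0 : ∀ p, Odd p → h p = 0) (k : ℕ) :
    ∑ p ∈ Finset.range (2 * k + 2), h p = ∑ j ∈ Finset.range (k + 1), h (2 * j) := by
  induction k with
  | zero => simp [Finset.sum_range_succ, h0 1 ⟨0, by ring⟩]
  | succ k ih =>
    rw [show 2 * (k + 1) + 2 = (2 * k + 2) + 1 + 1 by ring, Finset.sum_range_succ,
      Finset.sum_range_succ, ih, h0 (2 * k + 2 + 1) ⟨k + 1, by ring⟩,
      Finset.sum_range_succ (fun j => h (2 * j)) (k + 1)]
    simp [show 2 * (k + 1) = 2 * k + 2 by ring]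

private lemma coeffC (p : ℕ) :
    (PowerSeries.coeff p) ((2 : ℚ⟦X⟧) * bernoulliPowerSeries ℚ -
      PowerSeries.rescale 2 (bernoulliPowerSeries ℚ)) =
    (2 - 2 ^ p) * (bernoulli p / p.factorial) := by
  rw [two_mul]
  simp only [map_sub, map_add, PowerSeries.coeff_rescale, bernoulliPowerSeries,
    PowerSeries.coeff_mk, eq_ratCast, Rat.cast_div]
  push_cast
  ring

private lemma keyQ' (N : ℕ) : ∑ j ∈ Finset.range (N + 1),
    (bernoulli (2 * j) * (2 - 2 ^ (2 * j)) / ((2 * j).factorial * (2 * (N - j) + 1).factorial) : ℚ)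
    = if N = 0 then 1 else 0 := by
  have hc := congrArg (PowerSeries.coeff (2 * N + 1)) key_ps
  rw [PowerSeries.coeff_mul, Finset.Nat.sum_antidiagonal_eq_sum_range_succ_mk,
    PowerSeries.coeff_X] at hc
  rw [show (2 * N + 1).succ = 2 * N + 2 by omega] at hc
  rw [sum_range_even _ ?_ N] at hc
  · rw [show (if 2 * N + 1 = 1 then (1:ℚ) else 0) = (if N = 0 then 1 else 0) by
      by_cases h : N = 0
      · subst h; norm_num
      · rw [if_neg (by omega), if_neg h]] at hc
    rw [← hc]
    apply Finset.sum_congr rfl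
    intro j hj
    have hjN : j ≤ N := by simpa [Nat.lt_succ_iff] using hj
    rw [coeffC, PowerSeries.coeff_mk]
    have h1 : 2 * N + 1 - 2 * j = 2 * (N - j) + 1 := by omega
    rw [h1, if_pos ⟨N - j, by ring⟩]
    push_cast
    field_simp
  · intro p hp
    rcases eq_or_ne p 1 with rfl | hp1
    · rw [coeffC]; norm_num
    · rw [coeffC, bernoulli_eq_bernoulli'_of_ne_one hp1,
        bernoulli'_eq_zero_of_odd hp (by rcases hp with ⟨m, rfl⟩; omega)]
      simp

private noncomputable def Pb : ℝ⟦X⟧ :=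
  PowerSeries.mk fun j => (bernoulli (2 * j) : ℝ) * (2 - 2 ^ (2 * j)) / (2 * j).factorial
private noncomputable def Dd : ℝ⟦X⟧ := PowerSeries.mk fun l => 1 / (2 * l + 1).factorial
private noncomputable def Qy (y : ℝ) : ℝ⟦X⟧ :=
  PowerSeries.mk fun i => y ^ (2 * i) / (2 * i).factorial

private lemma PD : Pb * Dd = 1 := by
  ext N
  rw [PowerSeries.coeff_mul, Finset.Nat.sum_antidiagonal_eq_sum_range_succ_mk,
    PowerSeries.coeff_one]
  rw [show Finset.range (N.succ) = Finset.range (N + 1) from rfl]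
  trans (((∑ j ∈ Finset.range (N + 1), (bernoulli (2 * j) * (2 - 2 ^ (2 * j)) /
      ((2 * j).factorial * (2 * (N - j) + 1).factorial) : ℚ)) : ℝ))
  · apply Finset.sum_congr rfl
    intro j hj
    simp only [Pb, Dd, PowerSeries.coeff_mk]
    rw [div_mul_div_comm, mul_one]
    push_cast
    ring
  · rw [← Rat.cast_sum, keyQ']
    split_ifs <;> norm_num

private lemma Gl (y : ℝ) (n : ℕ) :
    ∑ k ∈ Finset.range (n + 1), (PowerSeries.coeff k (Pb * Qy y)) *
      ((1 : ℝ) / (2 * (n - k) + 1).factorial) = y ^ (2 * n) / (2 * n).factorial := by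
  have h : (Pb * Qy y) * Dd = Qy y := by rw [mul_right_comm, PD, one_mul]
  have h2 := congrArg (PowerSeries.coeff n) h
  rw [PowerSeries.coeff_mul, Finset.Nat.sum_antidiagonal_eq_sum_range_succ_mk] at h2
  simpa [Dd, Qy, PowerSeries.coeff_mk] using h2

private lemma cnk (y : ℝ) (k : ℕ) :
    PowerSeries.coeff k (Pb * Qy y) = ∑ j ∈ Finset.range (k + 1),
      (bernoulli (2 * j) : ℝ) * (2 - 2 ^ (2 * j)) * y ^ (2 * k - 2 * j) /
        ((2 * j).factorial * (2 * k - 2 * j).factorial) := by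
  rw [PowerSeries.coeff_mul, Finset.Nat.sum_antidiagonal_eq_sum_range_succ_mk]
  apply Finset.sum_congr rfl
  intro j hj
  have hjk : j ≤ k := by simpa [Nat.lt_succ_iff] using hj
  have h1 : 2 * k - 2 * j = 2 * (k - j) := by omega
  simp only [Pb, Qy, PowerSeries.coeff_mk, h1]
  rw [div_mul_div_comm]

open Real in
private lemma bern_est (j : ℕ) (hj : j ≠ 0) :
    |(bernoulli (2 * j) : ℝ)| / (2 * j).factorial ≤ 4 / (2 * π) ^ (2 * j) := by
  have hz := hasSum_zeta_nat hj
  set V := ((-1 : ℝ) ^ (j + 1) * 2 ^ (2 * j - 1) * π ^ (2 * j) * bernoulli (2 * j) /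
    (2 * j).factorial) with hV
  have hnn : 0 ≤ V := hz.nonneg (fun n => by positivity)
  have hle : V ≤ 2 := by
    have h2 := hasSum_zeta_two
    have hle2 : V ≤ π ^ 2 / 6 := by
      refine hasSum_le (fun n => ?_) hz h2
      rcases Nat.eq_zero_or_pos n with rfl | hn
      · simp [zero_pow, hj]
      · have h1n : (1 : ℝ) ≤ (n : ℝ) := by exact_mod_cast hn
        apply one_div_le_one_div_of_le (by positivity)
        exact pow_le_pow_right₀ h1n (by omega)
    nlinarith [pi_lt_d2, pi_pos]
  have habs : |(bernoulli (2 * j) : ℝ)| / (2 * j).factorial * (2 ^ (2 * j - 1) * π ^ (2 * j))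
      = V := by
    rw [← abs_of_nonneg hnn, hV, abs_div, abs_mul, abs_mul, abs_mul, abs_pow, abs_pow, abs_pow,
      abs_neg, abs_one, one_pow, abs_of_nonneg pi_pos.le, Nat.abs_cast,
      abs_of_nonneg (by norm_num : (0:ℝ) ≤ 2)]
    ring
  have hpos : (0:ℝ) < 2 ^ (2 * j - 1) * π ^ (2 * j) := by positivity
  rw [← habs] at hle
  have h22 : (2:ℝ) ^ (2 * j) = 2 * 2 ^ (2 * j - 1) := by
    rw [← pow_succ']
    congr 1
    omega
  calc |(bernoulli (2 * j) : ℝ)| / (2 * j).factorial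
      ≤ 2 / (2 ^ (2 * j - 1) * π ^ (2 * j)) := by
        rw [le_div_iff₀ hpos]; exact hle
    _ = 4 / (2 * π) ^ (2 * j) := by
        rw [mul_pow, h22]; ring

open Real in
private lemma Pb_bound (j : ℕ) : |PowerSeries.coeff j Pb| ≤ 4 / π ^ (2 * j) := by
  rcases Nat.eq_zero_or_pos j with rfl | hj
  · norm_num [Pb, PowerSeries.coeff_mk]
  · have hb := bern_est j (by omega)
    have h4 : (4:ℝ) ≤ 2 ^ (2 * j) := by
      calc (4:ℝ) = 2 ^ 2 := by norm_num
        _ ≤ 2 ^ (2 * j) := pow_le_pow_right₀ one_le_two (by omega)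
    have h2 : |(2 : ℝ) - 2 ^ (2 * j)| ≤ 2 ^ (2 * j) := by
      rw [abs_sub_comm, abs_of_nonneg (by linarith)]
      linarith
    calc |PowerSeries.coeff j Pb|
        = |(bernoulli (2 * j) : ℝ)| / (2 * j).factorial * |(2 : ℝ) - 2 ^ (2 * j)| := by
          simp only [Pb, PowerSeries.coeff_mk]
          rw [abs_div, abs_mul, Nat.abs_cast]
          ring
      _ ≤ 4 / (2 * π) ^ (2 * j) * 2 ^ (2 * j) := by
          apply mul_le_mul hb h2 (abs_nonneg _) (by positivity)
      _ = 4 / π ^ (2 * j) := by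
          rw [mul_pow]
          have : (2:ℝ) ^ (2*j) ≠ 0 := by positivity
          field_simp

open Real

set_option maxHeartbeats 1000000 in
theorem stmt_11 (u x : ℝ) (h1 : 0 < |x|) (h2 : |x| < π) :
    HasSum
      (fun k : ℕ => (-1 : ℝ) ^ k *
        (∑ j ∈ Finset.range (k + 1),
          (bernoulli (2 * j) : ℝ) * (2 - 2 ^ (2 * j)) * (1 - u) ^ (2 * k - 2 * j) /
            ((Nat.factorial (2 * j)) * (Nat.factorial (2 * k - 2 * j)))) *
        x ^ (2 * k))
      (x * Real.cos (x * (1 - u)) / Real.sin x) := by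
  set y : ℝ := 1 - u with hy
  set f : ℕ → ℝ := fun k => (-1 : ℝ) ^ k *
        (∑ j ∈ Finset.range (k + 1),
          (bernoulli (2 * j) : ℝ) * (2 - 2 ^ (2 * j)) * (1 - u) ^ (2 * k - 2 * j) /
            ((Nat.factorial (2 * j)) * (Nat.factorial (2 * k - 2 * j)))) *
        x ^ (2 * k) with hfdef
  have hfk : ∀ k, f k = (-1 : ℝ) ^ k * PowerSeries.coeff k (Pb * Qy y) * x ^ (2 * k) := by
    intro k
    rw [hfdef, cnk]
  -- summability of the coefficient bound series
  have hπ : (0:ℝ) < π := pi_pos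
  have hr : (|x| / π) ^ 2 < 1 :=
    pow_lt_one₀ (by positivity) (by rw [div_lt_one hπ]; exact h2) (by norm_num)
  have hf1 : Summable (fun j => |PowerSeries.coeff j Pb| * |x| ^ (2 * j)) := by
    apply Summable.of_nonneg_of_le (fun j => by positivity) (fun j => ?_)
      (((summable_geometric_of_lt_one (by positivity) hr)).mul_left 4)
    calc |PowerSeries.coeff j Pb| * |x| ^ (2 * j)
        ≤ 4 / π ^ (2 * j) * |x| ^ (2 * j) := by
          apply mul_le_mul_of_nonneg_right (Pb_bound j) (by positivity)
      _ = 4 * ((|x| / π) ^ 2) ^ j := by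
          rw [← pow_mul, div_pow]
          field_simp
  have hg1 : Summable (fun i => (|y| * |x|) ^ (2 * i) / (2 * i).factorial) :=
    (Real.summable_pow_div_factorial (|y| * |x|)).comp_injective (fun a b h => by omega)
  have hcauchy : Summable fun n => ∑ k ∈ Finset.range (n + 1),
      (|PowerSeries.coeff k Pb| * |x| ^ (2 * k)) *
        ((|y| * |x|) ^ (2 * (n - k)) / (2 * (n - k)).factorial) := by
    have hs := summable_norm_sum_mul_range_of_summable_norm
      (f := fun j => |PowerSeries.coeff j Pb| * |x| ^ (2 * j))
      (g := fun i => (|y| * |x|) ^ (2 * i) / (2 * i).factorial)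
      (hf1.congr fun j => (Real.norm_eq_abs _ ▸ (abs_of_nonneg (by positivity)).symm))
      (hg1.congr fun i => (Real.norm_eq_abs _ ▸ (abs_of_nonneg (by positivity)).symm))
    exact hs.of_norm
  have hfs : Summable fun k => ‖f k‖ := by
    apply Summable.of_nonneg_of_le (fun k => norm_nonneg _) _ hcauchy
    intro k
    rw [hfk k, Real.norm_eq_abs, abs_mul, abs_mul, abs_pow, abs_pow, abs_neg, abs_one, one_pow,
      one_mul]
    have hco : |PowerSeries.coeff k (Pb * Qy y)| ≤ ∑ j ∈ Finset.range (k + 1),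
        |PowerSeries.coeff j Pb| * (|y| ^ (2 * (k - j)) / (2 * (k - j)).factorial) := by
      rw [PowerSeries.coeff_mul, Finset.Nat.sum_antidiagonal_eq_sum_range_succ_mk]
      refine (Finset.abs_sum_le_sum_abs _ _).trans ?_
      apply Finset.sum_le_sum
      intro j hj
      rw [abs_mul]
      apply le_of_eq
      congr 1
      simp only [Qy, PowerSeries.coeff_mk]
      rw [abs_div, abs_pow, Nat.abs_cast]
    calc |PowerSeries.coeff k (Pb * Qy y)| * |x| ^ (2 * k)
        ≤ (∑ j ∈ Finset.range (k + 1),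
            |PowerSeries.coeff j Pb| * (|y| ^ (2 * (k - j)) / (2 * (k - j)).factorial)) *
            |x| ^ (2 * k) := by
          apply mul_le_mul_of_nonneg_right hco (by positivity)
      _ = ∑ j ∈ Finset.range (k + 1), (|PowerSeries.coeff j Pb| * |x| ^ (2 * j)) *
            ((|y| * |x|) ^ (2 * (k - j)) / (2 * (k - j)).factorial) := by
          rw [Finset.sum_mul]
          apply Finset.sum_congr rfl
          intro j hj
          have hjk : j ≤ k := by simpa [Nat.lt_succ_iff] using hj
          have hx : |x| ^ (2 * k) = |x| ^ (2 * j) * |x| ^ (2 * (k - j)) := by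
            rw [← pow_add]; congr 1; omega
          rw [hx, mul_pow]
          ring
  have hfsum : Summable f := hfs.of_norm
  have hgnorm : Summable fun m => ‖(-1:ℝ) ^ m * x ^ (2 * m + 1) / (2 * m + 1).factorial‖ := by
    refine ((Real.summable_pow_div_factorial |x|).comp_injective
      (fun a b h => by simp only [] at h; omega : Function.Injective fun m => 2 * m + 1)).congr
        fun m => ?_
    rw [Function.comp_apply, Real.norm_eq_abs, abs_div, abs_mul, abs_pow, abs_pow, abs_neg,
      abs_one, one_pow, one_mul, Nat.abs_cast]
  -- the termwise Cauchy product identity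
  have termid : ∀ n, ∑ k ∈ Finset.range (n + 1),
      f k * ((-1:ℝ) ^ (n - k) * x ^ (2 * (n - k) + 1) / (2 * (n - k) + 1).factorial) =
      (-1:ℝ) ^ n * (x * y) ^ (2 * n) / (2 * n).factorial * x := by
    intro n
    have step : ∀ k ∈ Finset.range (n + 1),
        f k * ((-1:ℝ) ^ (n - k) * x ^ (2 * (n - k) + 1) / (2 * (n - k) + 1).factorial) =
        ((-1:ℝ) ^ n * x ^ (2 * n + 1)) *
          (PowerSeries.coeff k (Pb * Qy y) * ((1:ℝ) / (2 * (n - k) + 1).factorial)) := by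
      intro k hk
      have hkn : k ≤ n := by simpa [Nat.lt_succ_iff] using hk
      rw [hfk k]
      have e1 : (-1:ℝ) ^ k * (-1:ℝ) ^ (n - k) = (-1:ℝ) ^ n := by
        rw [← pow_add]; congr 1; omega
      have e2 : x ^ (2 * k) * x ^ (2 * (n - k) + 1) = x ^ (2 * n + 1) := by
        rw [← pow_add]; congr 1; omega
      calc (-1:ℝ) ^ k * PowerSeries.coeff k (Pb * Qy y) * x ^ (2 * k) *
            ((-1:ℝ) ^ (n - k) * x ^ (2 * (n - k) + 1) / (2 * (n - k) + 1).factorial)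
          = ((-1:ℝ) ^ k * (-1:ℝ) ^ (n - k)) * (x ^ (2 * k) * x ^ (2 * (n - k) + 1)) *
            (PowerSeries.coeff k (Pb * Qy y) * ((1:ℝ) / (2 * (n - k) + 1).factorial)) := by
            ring
        _ = _ := by rw [e1, e2]
    rw [Finset.sum_congr rfl step, ← Finset.mul_sum, Gl, mul_pow, pow_succ]
    ring
  -- assemble
  have hx0 : x ≠ 0 := abs_pos.mp h1
  have hne : Real.sin x ≠ 0 := by
    rcases abs_lt.mp h2 with ⟨hl, hr'⟩
    rcases lt_or_gt_of_ne hx0 with h | h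
    · have : 0 < Real.sin (-x) := Real.sin_pos_of_pos_of_lt_pi (by linarith) (by linarith)
      rw [Real.sin_neg] at this
      linarith [this]
    · exact (Real.sin_pos_of_pos_of_lt_pi h hr').ne'
  have key : (∑' k, f k) * Real.sin x = x * Real.cos (x * y) := by
    rw [← (Real.hasSum_sin x).tsum_eq,
      tsum_mul_tsum_eq_tsum_sum_range_of_summable_norm hfs hgnorm, tsum_congr termid,
      ((Real.hasSum_cos (x * y)).mul_right x).tsum_eq, mul_comm]
  have hT : (∑' k, f k) = x * Real.cos (x * y) / Real.sin x := by
    rw [eq_div_iff hne]; exact key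
  have hfin := hfsum.hasSum
  rwa [hT] at hfin
end

section
/- For every real number u and every real number x with 0 < |x| < π, the series ∑_{k=0}^{∞} (-1)^{k} [ ∑_{j=0}^{k} B_{2j}(2-2^{2j})(1-u)^{2k+1-2j}/((2j)!(2k+1-2j)!) ] x^{2k+1} converges and its sum equals x·sin(x(1-u))/sin(x). Equivalently, the (2k+1)-st Taylor coefficient at 0 of f(x) = x·sin(x(1-u))/sin(x) is (-1)^{k} ∑_{j=0}^{k} B_{2j}(2-2^{2j})(1-u)^{2k+1-2j}/((2j)!(2k+1-2j)!). -/
open Real Finset PowerSeries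

noncomputable def myc (p : ℕ) : ℝ :=
  (-1) ^ (p / 2) * (bernoulli p : ℝ) * (2 - 2 ^ p) / p.factorial

noncomputable def mys (q : ℕ) : ℝ :=
  if Even q then 0 else (-1) ^ (q / 2) / q.factorial

lemma bern_odd_mul (p : ℕ) (ho : Odd p) : (bernoulli p : ℚ) * (2 - 2 ^ p) = 0 := by
  rcases eq_or_ne p 1 with rfl | hp1
  · norm_num
  · rw [bernoulli_eq_bernoulli'_of_ne_one hp1, bernoulli'_eq_zero_of_odd ho ?_, zero_mul]
    obtain ⟨m, rfl⟩ := ho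
    omega

lemma key_formal :
    (2 * rescale Complex.I (bernoulliPowerSeries ℂ)
      - rescale (2 * Complex.I) (bernoulliPowerSeries ℂ)) * PowerSeries.sin ℂ
    = PowerSeries.X := by
  have hb := bernoulliPowerSeries_mul_exp_sub_one ℂ
  have hb1 : rescale Complex.I (bernoulliPowerSeries ℂ) *
      (rescale Complex.I (exp ℂ) - 1) = C Complex.I * X := by
    have := congrArg (rescale Complex.I) hb
    simpa [map_mul, map_sub, map_one, rescale_X] using this
  have hb2 : rescale (2 * Complex.I) (bernoulliPowerSeries ℂ) *
      (rescale (2 * Complex.I) (exp ℂ) - 1) = C (2 * Complex.I) * X := by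
    have := congrArg (rescale (2 * Complex.I)) hb
    simpa [map_mul, map_sub, map_one, rescale_X] using this
  have hsin : PowerSeries.sin ℂ * C (2 * Complex.I)
      = rescale Complex.I (exp ℂ) - rescale (-Complex.I) (exp ℂ) := by
    ext n
    rw [map_sub, coeff_rescale, coeff_rescale, PowerSeries.coeff_mul_C, coeff_exp,
      PowerSeries.sin, coeff_mk]
    rcases Nat.even_or_odd n with he | ho
    · rw [if_pos he, he.neg_pow, zero_mul, sub_self]
    · obtain ⟨m, rfl⟩ := ho
      have h2 : (2 * m + 1) / 2 = m := by omega
      rw [if_neg (by simp [Nat.even_iff]), h2, (by ring : 2 * m + 1 = m + m + 1)]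
      rw [eq_ratCast, eq_ratCast]
      push_cast
      have hI : (-Complex.I) ^ (m + m + 1) = - Complex.I ^ (m + m + 1) := by
        rw [neg_pow]
        have : (-1 : ℂ) ^ (m + m + 1) = -1 := Odd.neg_one_pow ⟨m, by ring⟩
        rw [this]; ring
      rw [hI]
      have hI2 : Complex.I ^ (m + m + 1) = (-1) ^ m * Complex.I := by
        rw [pow_succ, pow_add, ← mul_pow, Complex.I_mul_I]
      rw [hI2]
      ring
  have he : rescale Complex.I (exp ℂ) * rescale (-Complex.I) (exp ℂ) = 1 := by
    rw [exp_mul_exp_eq_exp_add, add_neg_cancel, rescale_zero]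
    simp
  have h2 : rescale Complex.I (exp ℂ) * rescale Complex.I (exp ℂ)
      = rescale (2 * Complex.I) (exp ℂ) := by
    rw [exp_mul_exp_eq_exp_add]; ring_nf
  have hC2 : C (2 * Complex.I) = 2 * C Complex.I := by
    rw [map_mul, map_ofNat]
  have hne : (C (2 * Complex.I)) ≠ 0 := by
    intro h
    have := congrArg (PowerSeries.constantCoeff) h
    simp at this
  apply mul_right_cancel₀ hne
  rw [mul_assoc, hsin]
  set b1 := rescale Complex.I (bernoulliPowerSeries ℂ)
  set b2 := rescale (2 * Complex.I) (bernoulliPowerSeries ℂ)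
  set e1 := rescale Complex.I (exp ℂ)
  set e3 := rescale (-Complex.I) (exp ℂ)
  set e2 := rescale (2 * Complex.I) (exp ℂ)
  linear_combination (2 + 2 * e3) * hb1 - e3 * hb2 + (b2 * e1 - 2 * b1) * he
    - b2 * e3 * h2 - (X + X * e3) * hC2

lemma coeff_myc (p : ℕ) :
    (PowerSeries.coeff p) (2 * rescale Complex.I (bernoulliPowerSeries ℂ)
      - rescale (2 * Complex.I) (bernoulliPowerSeries ℂ)) = ((myc p : ℝ) : ℂ) := by
  rw [map_sub, show (2 : ℂ⟦X⟧) = C 2 from (map_ofNat _ 2).symm, coeff_C_mul,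
    coeff_rescale, coeff_rescale, bernoulliPowerSeries, coeff_mk, eq_ratCast, myc]
  push_cast
  rcases Nat.even_or_odd p with ⟨m, rfl⟩ | ho
  · have h2 : (m + m) / 2 = m := by omega
    have hI : Complex.I ^ (m + m) = (-1) ^ m := by
      rw [pow_add, ← mul_pow, Complex.I_mul_I]
    rw [mul_pow, hI, h2]
    ring
  · have hz : ((bernoulli p : ℚ) : ℂ) * (2 - 2 ^ p) = 0 := by
      exact_mod_cast congrArg (Rat.cast : ℚ → ℂ) (bern_odd_mul p ho)
    rw [mul_pow]
    push_cast at hz ⊢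
    linear_combination ((Complex.I ^ p - (-1 : ℂ) ^ (p / 2)) / (p.factorial : ℂ)) * hz

lemma coeff_mys (q : ℕ) :
    (PowerSeries.coeff q) (PowerSeries.sin ℂ) = ((mys q : ℝ) : ℂ) := by
  rw [PowerSeries.sin, coeff_mk, mys]
  split_ifs
  · simp
  · rw [eq_ratCast]; push_cast; ring

lemma conv (n : ℕ) :
    ∑ pq ∈ Finset.HasAntidiagonal.antidiagonal n, myc pq.1 * mys pq.2 = if n = 1 then 1 else 0 := by
  have h := congrArg (PowerSeries.coeff n) key_formal
  rw [PowerSeries.coeff_mul, PowerSeries.coeff_X] at h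
  rw [Finset.sum_congr rfl (fun pq _ => by rw [coeff_myc pq.1, coeff_mys pq.2])] at h
  apply Complex.ofReal_injective
  push_cast [apply_ite (Complex.ofReal : ℝ → ℂ)]
  convert h using 2 <;> norm_num

lemma myc_odd_eq_zero {p : ℕ} (ho : Odd p) : myc p = 0 := by
  have hz : (bernoulli p : ℝ) * (2 - 2 ^ p) = 0 := by
    exact_mod_cast congrArg (Rat.cast : ℚ → ℝ) (bern_odd_mul p ho)
  rw [myc]
  linear_combination ((-1 : ℝ) ^ (p / 2) / p.factorial) * hz

lemma abs_myc_le (p : ℕ) : |myc p| ≤ π ^ 2 / 3 * (1 / π) ^ p := by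
  have hπ := Real.pi_pos
  rcases Nat.even_or_odd p with ⟨k, rfl⟩ | ho
  swap
  · rw [myc_odd_eq_zero ho, abs_zero]; positivity
  rcases Nat.eq_zero_or_pos k with rfl | hk
  · have h0 : myc (0 + 0) = 1 := by norm_num [myc]
    rw [h0, abs_one]
    have := Real.pi_gt_three
    rw [pow_zero, mul_one]
    nlinarith
  · have hk2 : 2 * k ≠ 0 := by omega
    have hzeta := hasSum_zeta_nat (k := k) hk.ne'
    set Z : ℝ := (-1 : ℝ) ^ (k + 1) * 2 ^ (2 * k - 1) * π ^ (2 * k) *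
      (bernoulli (2 * k) : ℝ) / ((2 * k).factorial : ℝ) with hZ
    have hZ0 : 0 ≤ Z := hzeta.nonneg (fun n => by positivity)
    have hZle : Z ≤ π ^ 2 / 6 := by
      refine hasSum_le (fun n => ?_) hzeta hasSum_zeta_two
      rcases Nat.eq_zero_or_pos n with rfl | hn
      · simp [zero_pow, hk2]
        
      · apply one_div_le_one_div_of_le (by positivity)
        refine pow_le_pow_right₀ ?_ (by omega)
        exact_mod_cast hn
    set t : ℝ := 2 ^ (2 * k - 1) * π ^ (2 * k) * ((bernoulli (2 * k) : ℝ) / ((2 * k).factorial : ℝ)) with ht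
    have htZ : |t| = Z := by
      have h1 : Z = (-1 : ℝ) ^ (k + 1) * t := by rw [hZ, ht]; ring
      have h2 : |Z| = |t| := by
        rw [h1, abs_mul, abs_pow, abs_neg, abs_one, one_pow, one_mul]
      rw [← h2, abs_of_nonneg hZ0]
    have habs : |t| ≤ π ^ 2 / 6 := htZ ▸ hZle
    have ht' : |t| = 2 ^ (2 * k - 1) * π ^ (2 * k) * (|(bernoulli (2 * k) : ℝ)| / ((2 * k).factorial : ℝ)) := by
      rw [ht, abs_mul, abs_mul, abs_div,
        abs_of_pos (by positivity : (0:ℝ) < 2 ^ (2 * k - 1)),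
        abs_of_pos (by positivity : (0:ℝ) < π ^ (2 * k)),
        abs_of_pos (by positivity : (0:ℝ) < (((2 * k).factorial : ℝ) : ℝ))]
    have hkey : |(bernoulli (2 * k) : ℝ)| / ((2 * k).factorial : ℝ) ≤ (π ^ 2 / 6) / (2 ^ (2 * k - 1) * π ^ (2 * k)) := by
      rw [le_div_iff₀ (by positivity)]
      calc |(bernoulli (2 * k) : ℝ)| / ((2 * k).factorial : ℝ) * (2 ^ (2 * k - 1) * π ^ (2 * k)) = |t| := by
            rw [ht']; ring
        _ ≤ π ^ 2 / 6 := habs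
    have h22 : |2 - (2:ℝ) ^ (2 * k)| ≤ 2 ^ (2 * k) := by
      have h2le : (2:ℝ) ≤ 2 ^ (2 * k) := by
        calc (2:ℝ) = 2 ^ 1 := (pow_one 2).symm
          _ ≤ 2 ^ (2 * k) := pow_le_pow_right₀ one_le_two (by omega)
      rw [abs_sub_comm, abs_of_nonneg (by linarith)]
      linarith
    have hmyc_abs : |myc (k + k)| ≤ 2 ^ (2 * k) * (|(bernoulli (2 * k) : ℝ)| / ((2 * k).factorial : ℝ)) := by
      rw [myc, show k + k = 2 * k from (two_mul k).symm, abs_div, abs_mul, abs_mul, abs_pow,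
        abs_neg, abs_one, one_pow, one_mul,
        abs_of_pos (by positivity : (0:ℝ) < (((2 * k).factorial : ℝ) : ℝ))]
      calc |(bernoulli (2 * k) : ℝ)| * |2 - (2:ℝ) ^ (2 * k)| / ((2 * k).factorial : ℝ)
          ≤ |(bernoulli (2 * k) : ℝ)| * 2 ^ (2 * k) / ((2 * k).factorial : ℝ) := by gcongr
        _ = 2 ^ (2 * k) * (|(bernoulli (2 * k) : ℝ)| / ((2 * k).factorial : ℝ)) := by ring
    have h2k : (2:ℝ) ^ (2 * k) = 2 * 2 ^ (2 * k - 1) := by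
      rw [← pow_succ']
      congr 1
      omega
    calc |myc (k + k)| ≤ 2 ^ (2 * k) * (|(bernoulli (2 * k) : ℝ)| / ((2 * k).factorial : ℝ)) := hmyc_abs
      _ ≤ 2 ^ (2 * k) * ((π ^ 2 / 6) / (2 ^ (2 * k - 1) * π ^ (2 * k))) := by gcongr
      _ = π ^ 2 / 3 * (1 / π) ^ (k + k) := by
          rw [h2k, div_pow, one_pow, show k + k = 2 * k from (two_mul k).symm]
          field_simp
          ring

lemma mys_even_eq_zero {q : ℕ} (he : Even q) : mys q = 0 := if_pos he

lemma hasSum_mys (y : ℝ) : HasSum (fun q => mys q * y ^ q) (Real.sin y) := by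
  have hinj : Function.Injective (fun n : ℕ => 2 * n + 1) := fun a b h => by
    have h' : 2 * a + 1 = 2 * b + 1 := h
    omega
  rw [← hinj.hasSum_iff ?_]
  · have h := Real.hasSum_sin y
    convert h using 1
    funext n
    have he : ¬ Even (2 * n + 1) := by simp [Nat.even_iff]
    have hd : (2 * n + 1) / 2 = n := by omega
    simp only [Function.comp_apply, mys, if_neg he, hd]
    ring
  · intro q hq
    have he : Even q := by
      by_contra hodd
      obtain ⟨m, hm⟩ := Nat.odd_iff.mpr (Nat.not_even_iff.mp hodd)
      exact hq ⟨m, show 2 * m + 1 = q by omega⟩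
    rw [mys_even_eq_zero he, zero_mul]

lemma summable_mys (y : ℝ) : Summable (fun q => ‖mys q * y ^ q‖) := by
  refine Summable.of_nonneg_of_le (fun _ => norm_nonneg _) (fun q => ?_)
    (Real.summable_pow_div_factorial |y|)
  rw [norm_mul, norm_pow, Real.norm_eq_abs, Real.norm_eq_abs]
  have hq : |mys q| ≤ 1 / q.factorial := by
    rw [mys]
    split_ifs
    · rw [abs_zero]; positivity
    · rw [abs_div, abs_pow, abs_neg, abs_one, one_pow,
        abs_of_pos (by positivity : (0:ℝ) < (q.factorial : ℝ))]
  calc |mys q| * |y| ^ q ≤ 1 / q.factorial * |y| ^ q := by gcongr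
    _ = |y| ^ q / q.factorial := by ring

lemma sum_range_even_s12 (f : ℕ → ℝ) (hf : ∀ p, Odd p → f p = 0) (n : ℕ) :
    ∑ p ∈ Finset.range (2 * n), f p = ∑ j ∈ Finset.range n, f (2 * j) := by
  induction n with
  | zero => simp
  | succ n ih =>
    rw [show 2 * (n + 1) = 2 * n + 1 + 1 by omega, Finset.sum_range_succ, Finset.sum_range_succ,
      Finset.sum_range_succ, ih, hf (2 * n + 1) ⟨n, by omega⟩]
    ring

theorem stmt_12 (u x : ℝ) (h1 : 0 < |x|) (h2 : |x| < π) :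
    HasSum
      (fun k : ℕ => (-1 : ℝ) ^ k *
        (∑ j ∈ Finset.range (k + 1),
          (bernoulli (2 * j) : ℝ) * (2 - 2 ^ (2 * j)) * (1 - u) ^ (2 * k + 1 - 2 * j) /
            ((Nat.factorial (2 * j)) * (Nat.factorial (2 * k + 1 - 2 * j)))) *
        x ^ (2 * k + 1))
      (x * Real.sin (x * (1 - u)) / Real.sin x) := by
  have hπ := Real.pi_pos
  have hx0 : x ≠ 0 := abs_pos.mp h1
  have hsinx : Real.sin x ≠ 0 := by
    intro h0
    obtain ⟨hl, hr⟩ := abs_lt.mp h2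
    exact hx0 ((Real.sin_eq_zero_iff_of_lt_of_lt hl hr).mp h0)
  set r := |x| / π with hrdef
  have hr : r < 1 := (div_lt_one hπ).2 h2
  have hr0 : 0 ≤ r := by positivity
  have hfs : Summable (fun p => ‖myc p * x ^ p‖) := by
    refine Summable.of_nonneg_of_le (fun _ => norm_nonneg _) (fun p => ?_)
      ((summable_geometric_of_lt_one hr0 hr).mul_left (π ^ 2 / 3))
    rw [norm_mul, norm_pow, Real.norm_eq_abs, Real.norm_eq_abs]
    calc |myc p| * |x| ^ p ≤ (π ^ 2 / 3 * (1 / π) ^ p) * |x| ^ p :=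
          mul_le_mul_of_nonneg_right (abs_myc_le p) (by positivity)
      _ = π ^ 2 / 3 * r ^ p := by
          rw [mul_assoc, ← mul_pow, hrdef, one_div, inv_mul_eq_div]
  set T := ∑' p, myc p * x ^ p with hT
  have hTsum : HasSum (fun p => myc p * x ^ p) T := hfs.of_norm.hasSum
  have hTx : T * Real.sin x = x := by
    rw [hT, ← (hasSum_mys x).tsum_eq,
      tsum_mul_tsum_eq_tsum_sum_antidiagonal_of_summable_norm hfs (summable_mys x)]
    have hterm : ∀ n : ℕ, ∑ pq ∈ Finset.HasAntidiagonal.antidiagonal n,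
        (myc pq.1 * x ^ pq.1) * (mys pq.2 * x ^ pq.2) = (if n = 1 then x else 0) := by
      intro n
      have step : ∑ pq ∈ Finset.HasAntidiagonal.antidiagonal n, (myc pq.1 * x ^ pq.1) * (mys pq.2 * x ^ pq.2)
          = (∑ pq ∈ Finset.HasAntidiagonal.antidiagonal n, myc pq.1 * mys pq.2) * x ^ n := by
        rw [Finset.sum_mul]
        refine Finset.sum_congr rfl (fun pq hpq => ?_)
        have hmem := Finset.HasAntidiagonal.mem_antidiagonal.1 hpq
        rw [← hmem, pow_add]
        ring
      rw [step, conv n]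
      split_ifs with h
      · rw [h, one_mul, pow_one]
      · rw [zero_mul]
    rw [tsum_congr hterm, tsum_ite_eq]
  have hTval : T = x / Real.sin x := by
    rw [eq_div_iff hsinx]; exact hTx
  have Hprod : HasSum (fun n => ∑ pq ∈ Finset.HasAntidiagonal.antidiagonal n,
      (myc pq.1 * x ^ pq.1) * (mys pq.2 * (x * (1 - u)) ^ pq.2))
      (x * Real.sin (x * (1 - u)) / Real.sin x) := by
    have hs := summable_norm_sum_mul_antidiagonal_of_summable_norm hfs (summable_mys (x * (1 - u)))
    have h := hs.of_norm.hasSum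
    rw [← tsum_mul_tsum_eq_tsum_sum_antidiagonal_of_summable_norm hfs (summable_mys _),
      hTsum.tsum_eq, (hasSum_mys (x * (1 - u))).tsum_eq, hTval] at h
    have heq : x / Real.sin x * Real.sin (x * (1 - u))
        = x * Real.sin (x * (1 - u)) / Real.sin x := by ring
    rw [heq] at h
    exact h
  have hinj : Function.Injective (fun k : ℕ => 2 * k + 1) := fun a b h => by
    have h' : 2 * a + 1 = 2 * b + 1 := h
    omega
  have hvanish : ∀ n ∉ Set.range (fun k : ℕ => 2 * k + 1),
      ∑ pq ∈ Finset.HasAntidiagonal.antidiagonal n, (myc pq.1 * x ^ pq.1) * (mys pq.2 * (x * (1 - u)) ^ pq.2) = 0 := by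
    intro n hn
    have hev : Even n := by
      by_contra hodd
      obtain ⟨m, hm⟩ := Nat.odd_iff.mpr (Nat.not_even_iff.mp hodd)
      exact hn ⟨m, show 2 * m + 1 = n by omega⟩
    refine Finset.sum_eq_zero (fun pq hpq => ?_)
    have hmem := Finset.HasAntidiagonal.mem_antidiagonal.1 hpq
    rcases Nat.even_or_odd pq.1 with he1 | ho1
    · have he2 : Even pq.2 := by
        rcases he1 with ⟨a, ha⟩; rcases hev with ⟨b, hb⟩
        exact ⟨b - a, by omega⟩
      rw [mys_even_eq_zero he2]
      ring
    · rw [myc_odd_eq_zero ho1]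
      ring
  rw [← hinj.hasSum_iff hvanish] at Hprod
  convert Hprod using 1
  funext k
  simp only [Function.comp_apply]
  rw [Finset.Nat.sum_antidiagonal_eq_sum_range_succ_mk,
    show (2 * k + 1).succ = 2 * (k + 1) by omega,
    sum_range_even_s12 _ (fun p hp => by rw [myc_odd_eq_zero hp]; ring) (k + 1)]
  rw [Finset.mul_sum, Finset.sum_mul]
  refine Finset.sum_congr rfl (fun j hj => ?_)
  have hjk : j ≤ k := by
    have := Finset.mem_range.1 hj
    omega
  set m := k - j with hm
  have hq : 2 * k + 1 - 2 * j = 2 * m + 1 := by omega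
  have hoq : ¬ Even (2 * m + 1) := by simp [Nat.even_iff]
  have hdq : (2 * m + 1) / 2 = m := by omega
  have hdj : (2 * j) / 2 = j := by omega
  rw [hq, myc, mys, if_neg hoq, hdq, hdj, mul_pow]
  have hxp : x ^ (2 * j) * x ^ (2 * m + 1) = x ^ (2 * k + 1) := by
    rw [← pow_add]
    congr 1
    omega
  have hsg : ((-1 : ℝ)) ^ j * (-1) ^ m = (-1) ^ k := by
    rw [← pow_add]
    congr 1
    omega
  have hf1 : ((2 * j).factorial : ℝ) ≠ 0 := by positivity
  have hf2 : ((2 * m + 1).factorial : ℝ) ≠ 0 := by positivity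
  dsimp only
  rw [← hxp, ← hsg]
  field_simp
end
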